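/- arXiv:math-ph/0403030 — 4 statements merged into one kernel-verified Lean document; each statement's English description precedes it below -/
import Mathlib

section
/- (The matrix Riccati equation is solved globally by a linear flow and preserves the Siegel upper half-space.) Let d ≥ 1 and let A, D, K : ℝ → M_d(ℝ) be continuous with A(t) and D(t) symmetric for every t. Let B₀ ∈ Σ_d and let U, V : ℝ → M_d(ℂ) be the C¹ solutions of the linear system U̇(t) = −A(t)V(t) − K(t)ᵀU(t), V̇(t) = K(t)V(t) + D(t)U(t), with U(0) = B₀ and V(0) = I_d. Then for every t ∈ ℝ: (a) V(t) is invertible; (b) B(t) := U(t)V(t)^{-1} belongs to Σ_d, i.e. is complex symmetric with positive-definite imaginary part; (c) B satisfies the Riccati equation −Ḃ(t) = A(t) + K(t)ᵀB(t) + B(t)K(t) + B(t)D(t)B(t). -/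
noncomputable section

open Matrix

/-- Entrywise complexification of a real matrix. -/
def cmplx {m n : Type*} (M : Matrix m n ℝ) : Matrix m n ℂ := M.map Complex.ofReal

/-- Entrywise imaginary part of a complex matrix. -/
def imM {d : ℕ} (M : Matrix (Fin d) (Fin d) ℂ) : Matrix (Fin d) (Fin d) ℝ :=
  Matrix.of fun i j => (M i j).im

attribute [local instance] Matrix.linftyOpNormedRing Matrix.linftyOpNormedAlgebra

namespace RiccatiAux

variable {d : ℕ}

abbrev Md (d : ℕ) := Matrix (Fin d) (Fin d) ℂ

/-- entry evaluation as a continuous linear map -/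
def entryCLM (i j : Fin d) : Md d →L[ℝ] ℂ :=
  LinearMap.toContinuousLinearMap
    { toFun := fun M => M i j
      map_add' := fun _ _ => rfl
      map_smul' := fun _ _ => rfl }

theorem hasDerivAt_entry {f : ℝ → Md d} {f' : Md d} {t : ℝ}
    (h : HasDerivAt f f' t) (i j : Fin d) :
    HasDerivAt (fun s => f s i j) (f' i j) t :=
  (entryCLM i j).hasFDerivAt.comp_hasDerivAt t h

theorem hasDerivAt_matrix {f : ℝ → Md d} {f' : Md d} {t : ℝ}
    (h : ∀ i j, HasDerivAt (fun s => f s i j) (f' i j) t) :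
    HasDerivAt f f' t := by
  have e : ∀ (M : Md d), ∑ p : Fin d × Fin d, M p.1 p.2 • single p.1 p.2 (1 : ℂ) = M := by
    intro M
    conv_rhs => rw [matrix_eq_sum_single M, ← Finset.sum_product']
    refine Finset.sum_congr rfl fun p _ => ?_
    rw [smul_single, smul_eq_mul, mul_one]
  have h2 : HasDerivAt (fun s => ∑ p : Fin d × Fin d, f s p.1 p.2 • single p.1 p.2 (1 : ℂ))
      (∑ p : Fin d × Fin d, f' p.1 p.2 • single p.1 p.2 (1 : ℂ)) t :=
    HasDerivAt.fun_sum fun p _ => (h p.1 p.2).smul_const _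
  rw [e f'] at h2
  have e2 : (fun s => ∑ p : Fin d × Fin d, f s p.1 p.2 • single p.1 p.2 (1 : ℂ)) = f :=
    funext fun s => e (f s)
  rwa [e2] at h2

theorem cmplx_conjTranspose (M : Matrix (Fin d) (Fin d) ℝ) : (cmplx M)ᴴ = cmplx Mᵀ := by
  ext i j
  simp [cmplx, conjTranspose_apply]

theorem cmplx_transpose (M : Matrix (Fin d) (Fin d) ℝ) : (cmplx M)ᵀ = cmplx Mᵀ := rfl

theorem sub_conjTranspose {M : Md d} (h : M.IsSymm) :
    M - Mᴴ = (2 * Complex.I) • cmplx (imM M) := by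
  ext i j
  simp only [Matrix.sub_apply, Matrix.smul_apply, conjTranspose_apply, cmplx, imM,
    Matrix.map_apply, Matrix.of_apply, h.apply i j, Complex.star_def, smul_eq_mul]
  rw [Complex.sub_conj]
  push_cast
  ring

theorem dot_real (M : Matrix (Fin d) (Fin d) ℝ) (x : Fin d → ℝ) :
    star (fun i => (x i : ℂ)) ⬝ᵥ (cmplx M *ᵥ fun i => (x i : ℂ))
      = ((x ⬝ᵥ (M *ᵥ x) : ℝ) : ℂ) := by
  simp only [dotProduct, mulVec, Pi.star_apply, cmplx, Matrix.map_apply]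
  push_cast
  simp [dotProduct, Complex.conj_ofReal]

theorem re_quad {M : Matrix (Fin d) (Fin d) ℝ} (hM : M.PosDef) {y : Fin d → ℂ} (hy : y ≠ 0) :
    0 < (star y ⬝ᵥ (cmplx M *ᵥ y)).re := by
  have lhs_eq : (star y ⬝ᵥ (cmplx M *ᵥ y)).re
      = ∑ i, ∑ j, M i j * ((y i).re * (y j).re + (y i).im * (y j).im) := by
    simp only [dotProduct, mulVec, Pi.star_apply, cmplx, Matrix.map_apply, Finset.mul_sum,
      Complex.re_sum]
    refine Finset.sum_congr rfl fun i _ => Finset.sum_congr rfl fun j _ => ?_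
    simp only [Complex.star_def, Complex.mul_re, Complex.mul_im, Complex.conj_re,
      Complex.conj_im, Complex.ofReal_re, Complex.ofReal_im]
    ring
  have rhs_eq : (fun i => (y i).re) ⬝ᵥ (M *ᵥ fun i => (y i).re)
        + (fun i => (y i).im) ⬝ᵥ (M *ᵥ fun i => (y i).im)
      = ∑ i, ∑ j, M i j * ((y i).re * (y j).re + (y i).im * (y j).im) := by
    simp only [dotProduct, mulVec, Finset.mul_sum, ← Finset.sum_add_distrib]
    exact Finset.sum_congr rfl fun i _ => Finset.sum_congr rfl fun j _ => by ring
  rw [lhs_eq, ← rhs_eq]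
  have hab : (fun i => (y i).re) ≠ 0 ∨ (fun i => (y i).im) ≠ 0 := by
    by_contra hc
    push_neg at hc
    apply hy
    funext i
    exact Complex.ext (congrFun hc.1 i) (congrFun hc.2 i)
  have hsa : ∀ z : Fin d → ℝ, 0 ≤ z ⬝ᵥ (M *ᵥ z) := fun z => by
    simpa using hM.posSemidef.dotProduct_mulVec_nonneg z
  rcases hab with h | h
  · have h1 := hM.dotProduct_mulVec_pos h
    simp only [star_trivial] at h1
    have h2 := hsa fun i => (y i).im
    linarith
  · have h1 := hM.dotProduct_mulVec_pos h
    simp only [star_trivial] at h1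
    have h2 := hsa fun i => (y i).re
    linarith

theorem riccati_algebra {R : Type*} [Ring R] (a k' k dd u v w : R) (h : v * w = 1) :
    (-a * v - k' * u) * w + u * -(w * (k * v + dd * u) * w)
      = -(a + k' * (u * w) + (u * w) * k + (u * w) * dd * (u * w)) := by
  have e1 : (-a * v - k' * u) * w = -a - k' * (u * w) := by
    rw [sub_mul, mul_assoc (-a) v w, h, mul_one, mul_assoc]
  have e2 : w * (k * v + dd * u) * w = w * k + w * (dd * (u * w)) := by
    rw [mul_add, add_mul, mul_assoc w (k * v) w, mul_assoc k v w, h, mul_one,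
      mul_assoc w (dd * u) w, mul_assoc dd u w]
  rw [e1, e2, mul_neg, mul_add, ← mul_assoc u w k, ← mul_assoc u w (dd * (u * w)),
    ← mul_assoc (u * w) dd (u * w)]
  abel

end RiccatiAux

open RiccatiAux

/-- The matrix Riccati equation is solved globally by a linear flow and
preserves the Siegel upper half-space: if `U̇ = −A V − Kᵀ U`, `V̇ = K V + D U` with
`U(0) = B₀ ∈ Σ_d`, `V(0) = 1`, then `V(t)` is invertible, `B(t) = U(t)V(t)⁻¹ ∈ Σ_d`, and
`−Ḃ = A + KᵀB + BK + BDB`. -/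
theorem riccati_global (d : ℕ) (hd : 1 ≤ d)
    (A D K : ℝ → Matrix (Fin d) (Fin d) ℝ)
    (hAcont : ∀ i j, Continuous fun t => A t i j)
    (hDcont : ∀ i j, Continuous fun t => D t i j)
    (hKcont : ∀ i j, Continuous fun t => K t i j)
    (hAsymm : ∀ t, (A t).IsSymm) (hDsymm : ∀ t, (D t).IsSymm)
    (B₀ : Matrix (Fin d) (Fin d) ℂ) (hB₀symm : B₀.IsSymm) (hB₀pos : (imM B₀).PosDef)
    (U V : ℝ → Matrix (Fin d) (Fin d) ℂ)
    (hU0 : U 0 = B₀) (hV0 : V 0 = 1)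
    (hUderiv : ∀ t i j, HasDerivAt (fun s => U s i j)
      ((-(cmplx (A t)) * V t - (cmplx (K t))ᵀ * U t) i j) t)
    (hVderiv : ∀ t i j, HasDerivAt (fun s => V s i j)
      ((cmplx (K t) * V t + cmplx (D t) * U t) i j) t) :
    ∀ t : ℝ,
      IsUnit (V t) ∧
      (U t * (V t)⁻¹).IsSymm ∧
      (imM (U t * (V t)⁻¹)).PosDef ∧
      ∀ i j, HasDerivAt (fun s => (U s * (V s)⁻¹) i j)
        ((-(cmplx (A t) + (cmplx (K t))ᵀ * (U t * (V t)⁻¹) + (U t * (V t)⁻¹) * cmplx (K t) +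
            (U t * (V t)⁻¹) * cmplx (D t) * (U t * (V t)⁻¹))) i j) t := by
  classical
  -- matrix-valued derivatives
  have hUd : ∀ r, HasDerivAt U (-(cmplx (A r)) * V r - (cmplx (K r))ᵀ * U r) r :=
    fun r => hasDerivAt_matrix (hUderiv r)
  have hVd : ∀ r, HasDerivAt V (cmplx (K r) * V r + cmplx (D r) * U r) r :=
    fun r => hasDerivAt_matrix (hVderiv r)
  have hUT : ∀ r, HasDerivAt (fun s => (U s)ᵀ) ((-(cmplx (A r)) * V r - (cmplx (K r))ᵀ * U r)ᵀ) r :=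
    fun r => hasDerivAt_matrix fun i j => hUderiv r j i
  have hVT : ∀ r, HasDerivAt (fun s => (V s)ᵀ) ((cmplx (K r) * V r + cmplx (D r) * U r)ᵀ) r :=
    fun r => hasDerivAt_matrix fun i j => hVderiv r j i
  have hUH : ∀ r, HasDerivAt (fun s => (U s)ᴴ) ((-(cmplx (A r)) * V r - (cmplx (K r))ᵀ * U r)ᴴ) r :=
    fun r => hasDerivAt_matrix fun i j => (hUderiv r j i).star
  have hVH : ∀ r, HasDerivAt (fun s => (V s)ᴴ) ((cmplx (K r) * V r + cmplx (D r) * U r)ᴴ) r :=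
    fun r => hasDerivAt_matrix fun i j => (hVderiv r j i).star
  -- symmetry facts for the (complexified) coefficients
  have hAH : ∀ s, (cmplx (A s))ᴴ = cmplx (A s) := fun s => by
    rw [cmplx_conjTranspose, (hAsymm s).eq]
  have hDH : ∀ s, (cmplx (D s))ᴴ = cmplx (D s) := fun s => by
    rw [cmplx_conjTranspose, (hDsymm s).eq]
  have hKH : ∀ s, (cmplx (K s))ᴴ = (cmplx (K s))ᵀ := fun s => by
    rw [cmplx_conjTranspose, cmplx_transpose]
  have hKTH : ∀ s, ((cmplx (K s))ᵀ)ᴴ = cmplx (K s) := fun s => by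
    ext i j
    simp [cmplx, conjTranspose_apply]
  have hAT : ∀ s, (cmplx (A s))ᵀ = cmplx (A s) := fun s => by
    rw [cmplx_transpose, (hAsymm s).eq]
  have hDT : ∀ s, (cmplx (D s))ᵀ = cmplx (D s) := fun s => by
    rw [cmplx_transpose, (hDsymm s).eq]
  -- first invariant : Vᵀ U - Uᵀ V ≡ 0
  have hW1 : ∀ s, (V s)ᵀ * U s - (U s)ᵀ * V s = 0 := by
    have hderiv : ∀ s, HasDerivAt (fun r => (V r)ᵀ * U r - (U r)ᵀ * V r) 0 s := by
      intro s
      have h1 := ((hVT s).mul (hUd s)).sub ((hUT s).mul (hVd s))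
      refine HasDerivAt.congr_deriv h1 ?_
      simp only [transpose_add, transpose_mul, transpose_sub, transpose_neg,
        transpose_transpose, hAT s, hDT s]
      noncomm_ring
    intro s
    have hc := is_const_of_deriv_eq_zero (f := fun r => (V r)ᵀ * U r - (U r)ᵀ * V r)
      (fun x => (hderiv x).differentiableAt) (fun x => (hderiv x).deriv) s 0
    rw [hc]
    simp [hU0, hV0, hB₀symm.eq]
  -- second invariant : Vᴴ U - Uᴴ V ≡ B₀ - B₀ᴴ
  have hW2 : ∀ s, (V s)ᴴ * U s - (U s)ᴴ * V s = B₀ - B₀ᴴ := by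
    have hderiv : ∀ s, HasDerivAt (fun r => (V r)ᴴ * U r - (U r)ᴴ * V r) 0 s := by
      intro s
      have h1 := ((hVH s).mul (hUd s)).sub ((hUH s).mul (hVd s))
      refine HasDerivAt.congr_deriv h1 ?_
      simp only [conjTranspose_add, conjTranspose_mul, conjTranspose_sub, conjTranspose_neg,
        hAH s, hDH s, hKH s, hKTH s]
      noncomm_ring
    intro s
    have hc := is_const_of_deriv_eq_zero (f := fun r => (V r)ᴴ * U r - (U r)ᴴ * V r)
      (fun x => (hderiv x).differentiableAt) (fun x => (hderiv x).deriv) s 0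
    rw [hc]
    simp [hU0, hV0]
  have hP : B₀ - B₀ᴴ = (2 * Complex.I) • cmplx (imM B₀) := sub_conjTranspose hB₀symm
  have h2I : (2 * Complex.I) ≠ 0 := by simp [Complex.I_ne_zero]
  -- invertibility of V
  have hVunit : ∀ s, IsUnit (V s) := by
    intro s
    rw [Matrix.isUnit_iff_isUnit_det, isUnit_iff_ne_zero]
    intro hdet
    obtain ⟨x, hx0, hx⟩ := (Matrix.exists_mulVec_eq_zero_iff).2 hdet
    have hzero : star x ⬝ᵥ (((V s)ᴴ * U s - (U s)ᴴ * V s) *ᵥ x) = 0 := by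
      rw [Matrix.sub_mulVec, dotProduct_sub, ← Matrix.mulVec_mulVec, ← Matrix.mulVec_mulVec,
        Matrix.dotProduct_mulVec (star x) ((V s)ᴴ), ← Matrix.star_mulVec, hx]
      simp
    rw [hW2 s, hP, Matrix.smul_mulVec, dotProduct_smul, smul_eq_mul] at hzero
    rcases mul_eq_zero.mp hzero with h | h
    · exact h2I h
    · have hq := re_quad hB₀pos hx0
      rw [h] at hq
      simp at hq
  intro t
  have hdet : IsUnit (V t).det := (Matrix.isUnit_iff_isUnit_det (V t)).mp (hVunit t)
  have hVW : V t * (V t)⁻¹ = 1 := Matrix.mul_nonsing_inv _ hdet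
  have hWV : (V t)⁻¹ * V t = 1 := Matrix.nonsing_inv_mul _ hdet
  have h1 : (V t)ᵀ * U t = (U t)ᵀ * V t := sub_eq_zero.mp (hW1 t)
  -- symmetry of B
  have hsymm : (U t * (V t)⁻¹).IsSymm := by
    show (U t * (V t)⁻¹)ᵀ = U t * (V t)⁻¹
    rw [transpose_mul, Matrix.transpose_nonsing_inv]
    have e1 : (U t)ᵀ = (V t)ᵀ * (U t * (V t)⁻¹) := by
      rw [← mul_assoc, h1, mul_assoc, hVW, mul_one]
    rw [e1, ← mul_assoc, Matrix.nonsing_inv_mul _ (by rwa [Matrix.det_transpose]), one_mul]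
  -- the key identity for the imaginary part
  have hWVH : ((V t)⁻¹)ᴴ * (V t)ᴴ = 1 := by
    rw [← conjTranspose_mul, hVW, conjTranspose_one]
  have e1 : U t * (V t)⁻¹ - (U t * (V t)⁻¹)ᴴ
      = ((V t)⁻¹)ᴴ * ((V t)ᴴ * U t - (U t)ᴴ * V t) * (V t)⁻¹ := by
    rw [Matrix.mul_sub, Matrix.sub_mul]
    congr 1
    · rw [← mul_assoc, hWVH, one_mul]
    · rw [conjTranspose_mul, ← mul_assoc, mul_assoc (((V t)⁻¹)ᴴ * (U t)ᴴ), hVW, mul_one]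
  have hkey : cmplx (imM (U t * (V t)⁻¹)) = ((V t)⁻¹)ᴴ * cmplx (imM B₀) * (V t)⁻¹ := by
    have e2 : (2 * Complex.I) • cmplx (imM (U t * (V t)⁻¹))
        = (2 * Complex.I) • (((V t)⁻¹)ᴴ * cmplx (imM B₀) * (V t)⁻¹) := by
      rw [← sub_conjTranspose hsymm, e1, hW2 t, hP, mul_smul_comm, smul_mul_assoc]
    exact smul_right_injective _ h2I e2
  -- positive definiteness
  have hpos : (imM (U t * (V t)⁻¹)).PosDef := by
    refine posDef_iff_dotProduct_mulVec.mpr ⟨?_, ?_⟩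
    · show (imM (U t * (V t)⁻¹))ᴴ = imM (U t * (V t)⁻¹)
      ext i j
      simp only [conjTranspose_apply, imM, Matrix.of_apply, star_trivial]
      rw [hsymm.apply i j]
    · intro x hx
      have hxc : (fun i => (x i : ℂ)) ≠ 0 := by
        intro hc
        apply hx
        funext i
        have h0 : (x i : ℂ) = 0 := by simpa using congrFun hc i
        simpa using Complex.ofReal_eq_zero.mp h0
      have hy0 : (V t)⁻¹ *ᵥ (fun i => (x i : ℂ)) ≠ 0 := by
        intro h0
        apply hxc
        have : V t *ᵥ ((V t)⁻¹ *ᵥ (fun i => (x i : ℂ))) = 0 := by rw [h0, Matrix.mulVec_zero]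
        rwa [Matrix.mulVec_mulVec, hVW, Matrix.one_mulVec] at this
      have hq : star (fun i => (x i : ℂ)) ⬝ᵥ (cmplx (imM (U t * (V t)⁻¹)) *ᵥ (fun i => (x i : ℂ)))
          = star ((V t)⁻¹ *ᵥ (fun i => (x i : ℂ)))
              ⬝ᵥ (cmplx (imM B₀) *ᵥ ((V t)⁻¹ *ᵥ (fun i => (x i : ℂ)))) := by
        rw [hkey, ← Matrix.mulVec_mulVec, ← Matrix.mulVec_mulVec,
          Matrix.dotProduct_mulVec (star fun i => (x i : ℂ)) (((V t)⁻¹)ᴴ), ← Matrix.star_mulVec]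
      have hq2 := re_quad hB₀pos hy0
      rw [← hq, dot_real] at hq2
      simpa using hq2
  -- the Riccati differential equation
  have hWd : HasDerivAt (fun s => (V s)⁻¹)
      (-((V t)⁻¹ * (cmplx (K t) * V t + cmplx (D t) * U t) * (V t)⁻¹)) t := by
    obtain ⟨u, hu⟩ := hVunit t
    have hF : HasFDerivAt (Ring.inverse : Md d → Md d)
        (-ContinuousLinearMap.mulLeftRight ℝ (Md d) ↑u⁻¹ ↑u⁻¹) (V t) :=
      hu ▸ hasFDerivAt_ringInverse u
    have hcomp := hF.comp_hasDerivAt t (hVd t)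
    have hfun : Ring.inverse ∘ V = fun s => (V s)⁻¹ :=
      funext fun s => (Matrix.nonsing_inv_eq_ringInverse (V s)).symm
    rw [hfun] at hcomp
    refine HasDerivAt.congr_deriv hcomp ?_
    have hui : (↑u⁻¹ : Md d) = (V t)⁻¹ := by
      rw [Matrix.coe_units_inv, hu]
    simp [ContinuousLinearMap.mulLeftRight_apply, hui]
  have hBd : HasDerivAt (fun s => U s * (V s)⁻¹)
      ((-(cmplx (A t)) * V t - (cmplx (K t))ᵀ * U t) * (V t)⁻¹
        + U t * -((V t)⁻¹ * (cmplx (K t) * V t + cmplx (D t) * U t) * (V t)⁻¹)) t :=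
    (hUd t).mul hWd
  have hval : (-(cmplx (A t)) * V t - (cmplx (K t))ᵀ * U t) * (V t)⁻¹
        + U t * -((V t)⁻¹ * (cmplx (K t) * V t + cmplx (D t) * U t) * (V t)⁻¹)
      = -(cmplx (A t) + (cmplx (K t))ᵀ * (U t * (V t)⁻¹) + (U t * (V t)⁻¹) * cmplx (K t) +
          (U t * (V t)⁻¹) * cmplx (D t) * (U t * (V t)⁻¹)) :=
    riccati_algebra (cmplx (A t)) ((cmplx (K t))ᵀ) (cmplx (K t)) (cmplx (D t)) (U t) (V t)
      ((V t)⁻¹) hVW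
  rw [hval] at hBd
  exact ⟨hVunit t, hsymm, hpos, fun i j => hasDerivAt_entry hBd i j⟩
end
end

section
/- (Metaplectic covariance of the phase-space width matrix G_B.) Let S ∈ Sp(d,ℝ) be written in d×d blocks S = [[S₁₁, S₁₂],[S₂₁, S₂₂]] and let B ∈ Σ_d. Then S₁₁ + S₁₂B is invertible, the matrix B′ := (S₂₁ + S₂₂B)(S₁₁ + S₁₂B)^{-1} belongs to Σ_d, and the associated width matrices satisfy G_{B′} = (S^{-1})ᵀ G_B S^{-1}. -/
set_option linter.unusedSectionVars false
set_option linter.unusedTactic false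
set_option linter.unnecessarySeqFocus false
set_option linter.unusedVariables false
set_option maxHeartbeats 1000000



noncomputable section

open Matrix

/-- The standard symplectic matrix `J = [[0, I_d],[−I_d, 0]]`. -/
def Jmat (d : ℕ) : Matrix (Fin d ⊕ Fin d) (Fin d ⊕ Fin d) ℝ :=
  Matrix.fromBlocks 0 1 (-1) 0

/-- Entrywise real part of a complex matrix. -/
def reM {d : ℕ} (M : Matrix (Fin d) (Fin d) ℂ) : Matrix (Fin d) (Fin d) ℝ :=
  Matrix.of fun i j => (M i j).re

/-- The width matrix `G_B`. -/
def GB {d : ℕ} (B : Matrix (Fin d) (Fin d) ℂ) :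
    Matrix (Fin d ⊕ Fin d) (Fin d ⊕ Fin d) ℝ :=
  Matrix.fromBlocks (imM B + reM B * (imM B)⁻¹ * reM B) (-(reM B * (imM B)⁻¹))
    (-((imM B)⁻¹ * reM B)) (imM B)⁻¹

section Aux

variable {m n p : Type*} [Fintype m] [Fintype n] [Fintype p]

lemma cmplx_mul (A : Matrix m n ℝ) (B : Matrix n p ℝ) :
    cmplx (A * B) = cmplx A * cmplx B := by
  ext i j; simp [cmplx, Matrix.mul_apply]

lemma cmplx_add (A B : Matrix m n ℝ) : cmplx (A + B) = cmplx A + cmplx B := by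
  ext i j; simp [cmplx]

lemma cmplx_neg (A : Matrix m n ℝ) : cmplx (-A) = -cmplx A := by
  ext i j; simp [cmplx]

lemma cmplx_zero : cmplx (0 : Matrix m n ℝ) = 0 := by
  ext i j; simp [cmplx]

lemma cmplx_one [DecidableEq n] : cmplx (1 : Matrix n n ℝ) = 1 := by
  ext i j; simp [cmplx, Matrix.one_apply, apply_ite]

lemma cmplx_transpose (A : Matrix m n ℝ) : cmplx Aᵀ = (cmplx A)ᵀ := by
  ext i j; simp [cmplx]

lemma cmplx_conjTranspose (A : Matrix m n ℝ) : (cmplx A)ᴴ = cmplx Aᵀ := by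
  ext i j; simp [cmplx, conjTranspose_apply]

lemma cmplx_inj (A B : Matrix m n ℝ) (h : cmplx A = cmplx B) : A = B := by
  ext i j
  have := congrFun (congrFun h i) j
  simpa [cmplx] using this

lemma cmplx_fromBlocks {n' m' : Type*} (A : Matrix n m ℝ) (B : Matrix n m' ℝ)
    (C : Matrix n' m ℝ) (D : Matrix n' m' ℝ) :
    cmplx (fromBlocks A B C D) = fromBlocks (cmplx A) (cmplx B) (cmplx C) (cmplx D) :=
  Matrix.fromBlocks_map A B C D Complex.ofReal

lemma cmplx_inv [DecidableEq n] (A : Matrix n n ℝ) (hA : IsUnit A.det) :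
    cmplx A⁻¹ = (cmplx A)⁻¹ := by
  refine (Matrix.inv_eq_right_inv ?_).symm
  rw [← cmplx_mul, Matrix.mul_nonsing_inv _ hA, cmplx_one]

end Aux

section AuxAlg

variable {n : Type*} [Fintype n] [DecidableEq n]

lemma aux_sym (P Q R T B : Matrix n n ℂ)
    (h1 : Pᵀ*R = Rᵀ*P) (h2 : Pᵀ*T = 1 + Rᵀ*Q) (h2t : Tᵀ*P = 1 + Qᵀ*R)
    (h3 : Qᵀ*T = Tᵀ*Q) (hB : Bᵀ = B) :
    (P+Q*B)ᵀ*(R+T*B) = (R+T*B)ᵀ*(P+Q*B) := by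
  simp only [transpose_add, transpose_mul, hB, add_mul, mul_add]
  rw [h1]
  have e1 : Pᵀ*(T*B) = B + Rᵀ*(Q*B) := by rw [← mul_assoc, h2, add_mul, one_mul, mul_assoc]
  have e2 : B*Tᵀ*P = B + B*(Qᵀ*R) := by rw [mul_assoc, h2t, mul_add, mul_one]
  have e3 : B*Qᵀ*(T*B) = B*Tᵀ*(Q*B) := by
    rw [mul_assoc, ← mul_assoc Qᵀ, h3, mul_assoc, mul_assoc]
  rw [e1, e3]
  rw [show B*Qᵀ*R = B*(Qᵀ*R) from mul_assoc _ _ _]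
  rw [show Rᵀ*(Q*B) = Rᵀ*Q*B from (mul_assoc _ _ _).symm]
  abel_nf
  rw [e2]
  abel

lemma aux_herm (P Q R T B C : Matrix n n ℂ)
    (h1 : Pᵀ*R = Rᵀ*P) (h2 : Pᵀ*T = 1 + Rᵀ*Q) (h2t : Tᵀ*P = 1 + Qᵀ*R) (h3 : Qᵀ*T = Tᵀ*Q) :
    (Pᵀ + C*Qᵀ)*(R+T*B) - (Rᵀ + C*Tᵀ)*(P+Q*B) = B - C := by
  simp only [add_mul, mul_add]
  have e1 : Pᵀ*(T*B) = B + Rᵀ*(Q*B) := by rw [← mul_assoc, h2, add_mul, one_mul, mul_assoc]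
  have e2 : C*Tᵀ*P = C + C*(Qᵀ*R) := by rw [mul_assoc, h2t, mul_add, mul_one]
  have e3 : C*Qᵀ*(T*B) = C*Tᵀ*(Q*B) := by
    rw [mul_assoc, ← mul_assoc Qᵀ, h3, mul_assoc, mul_assoc]
  rw [h1, e1, e2, e3, show C*Qᵀ*R = C*(Qᵀ*R) from mul_assoc _ _ _]
  abel

end AuxAlg

section AuxC

variable {d : ℕ}

lemma quad_re (Y : Matrix (Fin d) (Fin d) ℝ) (v : Fin d → ℂ) :
    (star v ⬝ᵥ (cmplx Y) *ᵥ v).re =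
      (fun i => (v i).re) ⬝ᵥ Y *ᵥ (fun i => (v i).re) +
      (fun i => (v i).im) ⬝ᵥ Y *ᵥ (fun i => (v i).im) := by
  simp only [dotProduct, mulVec, Complex.re_sum, Pi.star_apply]
  rw [← Finset.sum_add_distrib]
  congr 1; ext i
  simp only [Finset.mul_sum, Complex.re_sum, Finset.sum_mul]
  rw [← Finset.sum_add_distrib]
  congr 1; ext j
  simp [cmplx, Complex.mul_re, Complex.mul_im]

lemma pos_quad (Y : Matrix (Fin d) (Fin d) ℝ) (hY : Y.PosDef) (v : Fin d → ℂ)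
    (hv : v ≠ 0) : 0 < (star v ⬝ᵥ (cmplx Y) *ᵥ v).re := by
  rw [quad_re]
  have hab : (fun i => (v i).re) ≠ 0 ∨ (fun i => (v i).im) ≠ 0 := by
    by_contra h
    push_neg at h
    obtain ⟨h1, h2⟩ := h
    apply hv
    funext i
    exact Complex.ext (by simpa using congrFun h1 i) (by simpa using congrFun h2 i)
  have hsa : 0 ≤ (fun i => (v i).re) ⬝ᵥ Y *ᵥ (fun i => (v i).re) := by
    simpa using hY.posSemidef.dotProduct_mulVec_nonneg (fun i => (v i).re)
  have hsb : 0 ≤ (fun i => (v i).im) ⬝ᵥ Y *ᵥ (fun i => (v i).im) := by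
    simpa using hY.posSemidef.dotProduct_mulVec_nonneg (fun i => (v i).im)
  rcases hab with h | h
  · have := hY.dotProduct_mulVec_pos h
    simp only [star_trivial] at this
    linarith
  · have := hY.dotProduct_mulVec_pos h
    simp only [star_trivial] at this
    linarith

lemma B_decomp (B : Matrix (Fin d) (Fin d) ℂ) :
    B = cmplx (reM B) + Complex.I • cmplx (imM B) := by
  ext i j
  simp [cmplx, reM, imM, Complex.ext_iff]

lemma B_conjT (B : Matrix (Fin d) (Fin d) ℂ) (hB : Bᵀ = B) :
    Bᴴ = cmplx (reM B) - Complex.I • cmplx (imM B) := by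
  have h : ∀ i j, B j i = B i j :=
    fun i j => (show B j i = Bᵀ i j from rfl).trans (congrFun (congrFun hB i) j)
  ext i j
  simp [cmplx, reM, imM, conjTranspose_apply, h i j, Complex.ext_iff]

lemma sub_conjT (B : Matrix (Fin d) (Fin d) ℂ) (hB : Bᵀ = B) :
    B - Bᴴ = (2*Complex.I) • cmplx (imM B) := by
  rw [B_conjT B hB]
  nth_rewrite 1 [B_decomp B]
  ext i j
  simp
  ring

lemma GB_core {n : Type*} [Fintype n] [DecidableEq n]
    (B X Y Z : Matrix n n ℂ) (hBd : B = X + Complex.I • Y)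
    (hBH : Bᴴ = X - Complex.I • Y) (hZ1 : Y * Z = 1) (hZ2 : Z * Y = 1) :
    fromBlocks (Y + X*Z*X) (-(X*Z)) (-(Z*X)) Z =
      (fromBlocks 0 1 (-1) (0 : Matrix n n ℂ))ᵀ * (fromRows 1 B * Z * (fromRows 1 B)ᴴ) *
        fromBlocks 0 1 (-1) 0 + Complex.I • fromBlocks 0 1 (-1) 0 := by
  have hUH : (fromRows (1 : Matrix n n ℂ) B)ᴴ = fromCols 1 Bᴴ := by
    rw [conjTranspose_fromRows_eq_fromCols_conjTranspose, conjTranspose_one]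
  have hBZ : B * Z = X * Z + Complex.I • 1 := by
    rw [hBd, add_mul, smul_mul_assoc, hZ1]
  have hZBH : Z * Bᴴ = Z * X - Complex.I • 1 := by
    rw [hBH, mul_sub, mul_smul_comm, hZ2]
  have hmid : B * Z * Bᴴ = Y + X * Z * X := by
    rw [hBZ, hBH, add_mul, mul_sub, mul_sub]
    have e1 : X * Z * (Complex.I • Y) = Complex.I • X := by
      rw [mul_smul_comm, mul_assoc, hZ2, mul_one]
    have e2 : (Complex.I • (1 : Matrix n n ℂ)) * X = Complex.I • X := by
      rw [smul_mul_assoc, one_mul]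
    have e3 : (Complex.I • (1 : Matrix n n ℂ)) * (Complex.I • Y) = -Y := by
      rw [smul_mul_assoc, one_mul, smul_smul, Complex.I_mul_I, neg_one_smul]
    rw [e1, e2, e3]
    abel
  rw [hUH, fromRows_mul, one_mul, fromRows_mul_fromCols]
  rw [fromBlocks_transpose, transpose_zero, transpose_one, transpose_neg, transpose_one]
  rw [fromBlocks_multiply, fromBlocks_multiply]
  rw [show Complex.I • fromBlocks 0 1 (-1) (0 : Matrix n n ℂ)
      = fromBlocks 0 (Complex.I • 1) (Complex.I • (-1)) 0 by
    rw [fromBlocks_smul]; simp]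
  rw [fromBlocks_add]
  simp only [zero_mul, mul_zero, neg_mul, one_mul, mul_one, mul_neg, neg_neg, add_zero,
    zero_add, smul_neg]
  rw [hmid, hBZ, hZBH]
  congr 1 <;> abel_nf

lemma GB_eq (B : Matrix (Fin d) (Fin d) ℂ) (hB : Bᵀ = B)
    (hZ1 : cmplx (imM B) * cmplx ((imM B)⁻¹) = 1)
    (hZ2 : cmplx ((imM B)⁻¹) * cmplx (imM B) = 1) :
    cmplx (GB B) =
      (cmplx (Jmat d))ᵀ *
        (fromRows 1 B * cmplx ((imM B)⁻¹) * (fromRows 1 B)ᴴ) * cmplx (Jmat d)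
        + Complex.I • cmplx (Jmat d) := by
  have hJc : cmplx (Jmat d) = fromBlocks 0 1 (-1) (0 : Matrix (Fin d) (Fin d) ℂ) := by
    rw [Jmat, cmplx_fromBlocks, cmplx_zero, cmplx_one, cmplx_neg, cmplx_one]
  rw [GB, cmplx_fromBlocks, cmplx_add, cmplx_mul, cmplx_mul, cmplx_neg, cmplx_mul,
    cmplx_neg, cmplx_mul, hJc]
  exact GB_core B (cmplx (reM B)) (cmplx (imM B)) (cmplx ((imM B)⁻¹))
    (B_decomp B) (B_conjT B hB) hZ1 hZ2

end AuxC

/-- Metaplectic covariance of the phase-space width matrix: for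
`S ∈ Sp(d,ℝ)` and `B ∈ Σ_d`, the matrix `S₁₁ + S₁₂B` is invertible,
`B′ = (S₂₁ + S₂₂B)(S₁₁ + S₁₂B)⁻¹ ∈ Σ_d`, and `G_{B′} = (S⁻¹)ᵀ G_B S⁻¹`. -/
theorem GB_covariance (d : ℕ) (hd : 1 ≤ d)
    (S : Matrix (Fin d ⊕ Fin d) (Fin d ⊕ Fin d) ℝ)
    (hS : Sᵀ * Jmat d * S = Jmat d)
    (B : Matrix (Fin d) (Fin d) ℂ) (hBsymm : B.IsSymm) (hBpos : (imM B).PosDef) :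
    IsUnit (cmplx S.toBlocks₁₁ + cmplx S.toBlocks₁₂ * B) ∧
      ((cmplx S.toBlocks₂₁ + cmplx S.toBlocks₂₂ * B) *
          (cmplx S.toBlocks₁₁ + cmplx S.toBlocks₁₂ * B)⁻¹).IsSymm ∧
      (imM ((cmplx S.toBlocks₂₁ + cmplx S.toBlocks₂₂ * B) *
          (cmplx S.toBlocks₁₁ + cmplx S.toBlocks₁₂ * B)⁻¹)).PosDef ∧
      GB ((cmplx S.toBlocks₂₁ + cmplx S.toBlocks₂₂ * B) *
            (cmplx S.toBlocks₁₁ + cmplx S.toBlocks₁₂ * B)⁻¹) =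
        (S⁻¹)ᵀ * GB B * S⁻¹ := by
  have hBt : Bᵀ = B := hBsymm
  set P := cmplx S.toBlocks₁₁ with hPdef
  set Q := cmplx S.toBlocks₁₂ with hQdef
  set R := cmplx S.toBlocks₂₁ with hRdef
  set T := cmplx S.toBlocks₂₂ with hTdef
  set M := P + Q * B with hMdef
  set N := R + T * B with hNdef
  -- complexified symplectic relation
  have hSb : cmplx S = fromBlocks P Q R T := by
    conv_lhs => rw [← S.fromBlocks_toBlocks]
    exact cmplx_fromBlocks _ _ _ _
  have hJc : cmplx (Jmat d) = fromBlocks 0 1 (-1) (0 : Matrix (Fin d) (Fin d) ℂ) := by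
    rw [Jmat, cmplx_fromBlocks, cmplx_zero, cmplx_one, cmplx_neg, cmplx_one]
  have hScJ : (cmplx S)ᵀ * cmplx (Jmat d) * cmplx S = cmplx (Jmat d) := by
    rw [← cmplx_transpose, ← cmplx_mul, ← cmplx_mul, hS]
  have hSc := hScJ
  rw [hSb, hJc, fromBlocks_transpose, fromBlocks_multiply, fromBlocks_multiply] at hSc
  have h11 := congrArg Matrix.toBlocks₁₁ hSc
  have h12 := congrArg Matrix.toBlocks₁₂ hSc
  have h21 := congrArg Matrix.toBlocks₂₁ hSc
  have h22 := congrArg Matrix.toBlocks₂₂ hSc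
  simp only [Matrix.toBlocks_fromBlocks₁₁, Matrix.toBlocks_fromBlocks₁₂,
    Matrix.toBlocks_fromBlocks₂₁, Matrix.toBlocks_fromBlocks₂₂,
    Matrix.mul_zero, Matrix.zero_mul, Matrix.mul_one, Matrix.one_mul,
    Matrix.mul_neg, Matrix.neg_mul, zero_add, add_zero] at h11 h12 h21 h22
  have h1 : Pᵀ*R = Rᵀ*P := by
    have h : Rᵀ*P = Pᵀ*R := by rwa [neg_add_eq_zero] at h11
    exact h.symm
  have h2 : Pᵀ*T = 1 + Rᵀ*Q := by
    have h : Rᵀ*Q = -1 + Pᵀ*T := by rw [← h12]; abel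
    rw [h]; abel
  have h2t : Tᵀ*P = 1 + Qᵀ*R := by
    have h : Qᵀ*R = -1 + Tᵀ*P := by rw [← h21]; abel
    rw [h]; abel
  have h3 : Qᵀ*T = Tᵀ*Q := by
    have h : Tᵀ*Q = Qᵀ*T := by rwa [neg_add_eq_zero] at h22
    exact h.symm
  -- invertibility of S
  have hJJ : Jmat d * Jmat d = -1 := by
    rw [Jmat, fromBlocks_multiply]
    simp only [Matrix.mul_zero, Matrix.zero_mul, Matrix.mul_one, Matrix.one_mul,
      Matrix.mul_neg, Matrix.neg_mul, zero_add, add_zero, neg_zero]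
    rw [← Matrix.fromBlocks_one, fromBlocks_neg]
    simp
  have hJdet : (Jmat d).det ≠ 0 := by
    have h : (Jmat d).det * (Jmat d).det = 1 := by
      rw [← Matrix.det_mul, hJJ]
      rw [show (-1 : Matrix (Fin d ⊕ Fin d) (Fin d ⊕ Fin d) ℝ) = -(1 : Matrix _ _ ℝ) from rfl,
        Matrix.det_neg, Matrix.det_one, mul_one, Fintype.card_sum, Fintype.card_fin]
      exact Even.neg_one_pow (Even.add_self d)
    intro h0
    rw [h0, zero_mul] at h
    exact zero_ne_one h
  have hSdet : IsUnit S.det := by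
    have h := congrArg Matrix.det hS
    rw [Matrix.det_mul, Matrix.det_mul, Matrix.det_transpose] at h
    have h' : (S.det * S.det) * (Jmat d).det = 1 * (Jmat d).det := by
      linear_combination h
    exact IsUnit.of_mul_eq_one _ (mul_right_cancel₀ hJdet h')
  set Si := cmplx S⁻¹ with hSidef
  have hSiS : Si * cmplx S = 1 := by
    rw [hSidef, ← cmplx_mul, Matrix.nonsing_inv_mul _ hSdet, cmplx_one]
  have hSSi : cmplx S * Si = 1 := by
    rw [hSidef, ← cmplx_mul, Matrix.mul_nonsing_inv _ hSdet, cmplx_one]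
  -- Y invertibility
  have hYdet : IsUnit (imM B).det := isUnit_iff_ne_zero.mpr (ne_of_gt hBpos.det_pos)
  have hZ1 : cmplx (imM B) * cmplx ((imM B)⁻¹) = 1 := by
    rw [← cmplx_mul, Matrix.mul_nonsing_inv _ hYdet, cmplx_one]
  have hZ2 : cmplx ((imM B)⁻¹) * cmplx (imM B) = 1 := by
    rw [← cmplx_mul, Matrix.nonsing_inv_mul _ hYdet, cmplx_one]
  -- conjugate transposes of real blocks
  have hPH : Pᴴ = Pᵀ := by rw [hPdef, cmplx_conjTranspose, cmplx_transpose]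
  have hQH : Qᴴ = Qᵀ := by rw [hQdef, cmplx_conjTranspose, cmplx_transpose]
  have hRH : Rᴴ = Rᵀ := by rw [hRdef, cmplx_conjTranspose, cmplx_transpose]
  have hTH : Tᴴ = Tᵀ := by rw [hTdef, cmplx_conjTranspose, cmplx_transpose]
  have hMH : Mᴴ = Pᵀ + Bᴴ * Qᵀ := by
    rw [hMdef, conjTranspose_add, conjTranspose_mul, hPH, hQH]
  have hNH : Nᴴ = Rᵀ + Bᴴ * Tᵀ := by
    rw [hNdef, conjTranspose_add, conjTranspose_mul, hRH, hTH]
  have hHerm : Mᴴ * N - Nᴴ * M = (2*Complex.I) • cmplx (imM B) := by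
    rw [hMH, hNH, hNdef, hMdef, aux_herm P Q R T B Bᴴ h1 h2 h2t h3, sub_conjT B hBt]
  -- invertibility of M
  have h2I : (2*Complex.I : ℂ) ≠ 0 := by simp [Complex.I_ne_zero]
  have hMdetC : IsUnit M.det := by
    by_contra hc
    have hdet0 : M.det = 0 := by simpa [isUnit_iff_ne_zero] using hc
    obtain ⟨v, hv, hMv⟩ := (Matrix.exists_mulVec_eq_zero_iff).mpr hdet0
    have c1 : star v ⬝ᵥ ((Mᴴ * N) *ᵥ v) = 0 := by
      rw [← Matrix.mulVec_mulVec, Matrix.dotProduct_mulVec, ← Matrix.star_mulVec, hMv]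
      simp
    have c2 : star v ⬝ᵥ ((Nᴴ * M) *ᵥ v) = 0 := by
      rw [← Matrix.mulVec_mulVec, hMv]
      simp
    have e0 : star v ⬝ᵥ ((Mᴴ * N - Nᴴ * M) *ᵥ v) = 0 := by
      rw [Matrix.sub_mulVec, dotProduct_sub, c1, c2, sub_zero]
    rw [hHerm, Matrix.smul_mulVec, dotProduct_smul, smul_eq_mul] at e0
    have hz : star v ⬝ᵥ (cmplx (imM B) *ᵥ v) = 0 := (mul_eq_zero.mp e0).resolve_left h2I
    have hp := pos_quad (imM B) hBpos v hv
    rw [hz] at hp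
    simp at hp
  have hMu : IsUnit M := (Matrix.isUnit_iff_isUnit_det _).mpr hMdetC
  have hMTdet : IsUnit Mᵀ.det := by rwa [Matrix.det_transpose]
  have hMHdet : IsUnit Mᴴ.det := by rw [Matrix.det_conjTranspose]; exact hMdetC.star
  -- symmetry of B'
  set B' := N * M⁻¹ with hB'def
  have hsymMN : Mᵀ * N = Nᵀ * M := by
    rw [hMdef, hNdef]; exact aux_sym P Q R T B h1 h2 h2t h3 hBt
  have hB't : B'ᵀ = B' := by
    rw [hB'def, Matrix.transpose_mul, Matrix.transpose_nonsing_inv]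
    have hNT : Nᵀ = Mᵀ * (N * M⁻¹) := by
      rw [← Matrix.mul_assoc, hsymMN, Matrix.mul_nonsing_inv_cancel_right _ _ hMdetC]
    rw [hNT, Matrix.nonsing_inv_mul_cancel_left _ _ hMTdet]
  -- transformation of the imaginary part
  have hsub' : B' - B'ᴴ = (Mᴴ)⁻¹ * (Mᴴ*N - Nᴴ*M) * M⁻¹ := by
    rw [Matrix.mul_sub, Matrix.sub_mul]
    congr 1
    · rw [Matrix.nonsing_inv_mul_cancel_left _ _ hMHdet, hB'def]
    · rw [hB'def, conjTranspose_mul, Matrix.conjTranspose_nonsing_inv,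
        Matrix.mul_assoc ((Mᴴ)⁻¹), Matrix.mul_nonsing_inv_cancel_right _ _ hMdetC]
  have hY'c : cmplx (imM B') = (Mᴴ)⁻¹ * cmplx (imM B) * M⁻¹ := by
    have h1' : (2*Complex.I) • cmplx (imM B') =
        (2*Complex.I) • ((Mᴴ)⁻¹ * cmplx (imM B) * M⁻¹) := by
      rw [← sub_conjT B' hB't, hsub', hHerm, Matrix.mul_smul, Matrix.smul_mul]
    exact smul_right_injective _ h2I h1'
  -- positivity of imM B'
  have hB'ji : ∀ i j, B' j i = B' i j :=
    fun i j => (show B' j i = B'ᵀ i j from rfl).trans (congrFun (congrFun hB't i) j)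
  have hYpos' : (imM B').PosDef := by
    refine PosDef.of_dotProduct_mulVec_pos ?_ ?_
    · show (imM B')ᴴ = imM B'
      ext i j
      simp only [conjTranspose_apply, imM, Matrix.of_apply, star_trivial]
      exact congrArg Complex.im (hB'ji i j)
    · intro x hx
      set xc : Fin d → ℂ := fun i => (x i : ℂ) with hxcdef
      have hxc : xc ≠ 0 := by
        intro h
        apply hx
        funext i
        have := congrFun h i
        simpa [hxcdef] using this
      set w : Fin d → ℂ := M⁻¹ *ᵥ xc with hwdef
      have hw : w ≠ 0 := by
        intro h
        apply hxc
        have : M *ᵥ w = M *ᵥ 0 := by rw [h]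
        rw [hwdef, Matrix.mulVec_mulVec, Matrix.mul_nonsing_inv _ hMdetC,
          Matrix.one_mulVec, Matrix.mulVec_zero] at this
        exact this
      have key : star xc ⬝ᵥ (cmplx (imM B') *ᵥ xc) = star w ⬝ᵥ (cmplx (imM B) *ᵥ w) := by
        rw [hY'c, ← Matrix.mulVec_mulVec, ← Matrix.mulVec_mulVec,
          Matrix.dotProduct_mulVec, ← Matrix.conjTranspose_nonsing_inv,
          ← Matrix.star_mulVec, hwdef]
      have hre : (star xc ⬝ᵥ (cmplx (imM B') *ᵥ xc)).re = x ⬝ᵥ (imM B' *ᵥ x) := by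
        rw [quad_re]
        have ha : (fun i => (xc i).re) = x := by funext i; simp [hxcdef]
        have hb : (fun i => (xc i).im) = 0 := by funext i; simp [hxcdef]
        rw [ha, hb]
        simp [dotProduct]
      have hpos := pos_quad (imM B) hBpos w hw
      rw [← key, hre] at hpos
      simpa using hpos
  have hY'det : IsUnit (imM B').det := isUnit_iff_ne_zero.mpr (ne_of_gt hYpos'.det_pos)
  have hZ1' : cmplx (imM B') * cmplx ((imM B')⁻¹) = 1 := by
    rw [← cmplx_mul, Matrix.mul_nonsing_inv _ hY'det, cmplx_one]
  have hZ2' : cmplx ((imM B')⁻¹) * cmplx (imM B') = 1 := by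
    rw [← cmplx_mul, Matrix.nonsing_inv_mul _ hY'det, cmplx_one]
  -- transformation of the frame
  have hU : cmplx S * fromRows (1 : Matrix (Fin d) (Fin d) ℂ) B = fromRows M N := by
    rw [hSb, fromBlocks_mul_fromRows, Matrix.mul_one, Matrix.mul_one]
  have hU' : fromRows (1 : Matrix (Fin d) (Fin d) ℂ) B' =
      cmplx S * fromRows (1 : Matrix (Fin d) (Fin d) ℂ) B * M⁻¹ := by
    rw [hU, fromRows_mul, Matrix.mul_nonsing_inv _ hMdetC, hB'def]
  have hZ' : cmplx ((imM B')⁻¹) = M * cmplx ((imM B)⁻¹) * Mᴴ := by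
    rw [cmplx_inv _ hY'det, hY'c]
    refine Matrix.inv_eq_right_inv ?_
    rw [Matrix.mul_assoc ((Mᴴ)⁻¹ * cmplx (imM B)), Matrix.mul_assoc M,
      ← Matrix.mul_assoc M⁻¹, Matrix.nonsing_inv_mul _ hMdetC, Matrix.one_mul,
      ← Matrix.mul_assoc, Matrix.mul_assoc ((Mᴴ)⁻¹), hZ1, Matrix.mul_one,
      Matrix.nonsing_inv_mul _ hMHdet]
  -- J relations over ℂ
  have hJT : (cmplx (Jmat d))ᵀ = -(cmplx (Jmat d)) := by
    rw [← cmplx_transpose, ← cmplx_neg]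
    congr 1
    rw [Jmat, fromBlocks_transpose, fromBlocks_neg]
    simp
  have r1 : (cmplx S)ᵀ * cmplx (Jmat d) = cmplx (Jmat d) * Si := by
    have h := congrArg (fun X => X * Si) hScJ
    rw [Matrix.mul_assoc ((cmplx S)ᵀ * cmplx (Jmat d)), hSSi, Matrix.mul_one] at h
    exact h
  have r2 : cmplx (Jmat d) * cmplx S = Siᵀ * cmplx (Jmat d) := by
    have hh : Siᵀ * (cmplx S)ᵀ = 1 := by
      rw [← Matrix.transpose_mul, hSSi, Matrix.transpose_one]
    have h := congrArg (fun X => Siᵀ * X) hScJ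
    rw [← Matrix.mul_assoc, ← Matrix.mul_assoc, hh, Matrix.one_mul] at h
    exact h.symm ▸ h
  have hJinv : Siᵀ * cmplx (Jmat d) * Si = cmplx (Jmat d) := by
    rw [← r2, Matrix.mul_assoc, hSSi, Matrix.mul_one]
  have hJS : (cmplx (Jmat d))ᵀ * cmplx S = Siᵀ * (cmplx (Jmat d))ᵀ := by
    rw [hJT, Matrix.neg_mul, r2, Matrix.mul_neg]
  have hK' : cmplx (GB B') = Siᵀ * cmplx (GB B) * Si := by
    rw [GB_eq B' hB't hZ1' hZ2', GB_eq B hBt hZ1 hZ2, hU', hZ']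
    have hCH : (cmplx S * fromRows (1 : Matrix (Fin d) (Fin d) ℂ) B * M⁻¹)ᴴ
        = (Mᴴ)⁻¹ * ((fromRows (1 : Matrix (Fin d) (Fin d) ℂ) B)ᴴ * (cmplx S)ᵀ) := by
      simp only [conjTranspose_mul, Matrix.conjTranspose_nonsing_inv,
        cmplx_conjTranspose, cmplx_transpose, Matrix.mul_assoc]
    rw [hCH]
    have hsplit : ∀ A : Matrix (Fin d ⊕ Fin d) (Fin d ⊕ Fin d) ℂ,
        Siᵀ * (A + Complex.I • cmplx (Jmat d)) * Si
          = Siᵀ * A * Si + Complex.I • cmplx (Jmat d) := by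
      intro A
      rw [Matrix.mul_add, Matrix.add_mul, Matrix.mul_smul, Matrix.smul_mul, hJinv]
    rw [hsplit]
    congr 1
    simp only [Matrix.mul_assoc]
    rw [r1]
    rw [Matrix.nonsing_inv_mul_cancel_left _ _ hMdetC,
      Matrix.mul_nonsing_inv_cancel_left _ _ hMHdet]
    rw [← Matrix.mul_assoc ((cmplx (Jmat d))ᵀ) (cmplx S), hJS, Matrix.mul_assoc]
  refine ⟨hMu, hB't, hYpos', ?_⟩
  apply cmplx_inj
  rw [cmplx_mul, cmplx_mul, cmplx_transpose]
  exact hK'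
end
end

section
/- (Wigner transform of a coherent state is a Gaussian with width matrix G_B.) Let d ≥ 1, ℏ > 0, (q,p) ∈ ℝ^d × ℝ^d, and let B be a complex symmetric d×d matrix with positive-definite imaginary part. Then for every (x,ξ) ∈ ℝ^d × ℝ^d, ∫_{ℝ^d} e^{−iξ·y/ℏ} conj(φ^B_{(q,p)}(x − y/2)) φ^B_{(q,p)}(x + y/2) dy = 2^d exp(−(1/ℏ)((x,ξ)−(q,p))·G_B((x,ξ)−(q,p))). -/
noncomputable section

open Matrix MeasureTheory

/-- The coherent state `φ^B_{(q,p)}` of the Heisenberg group. -/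
def cohState (d : ℕ) (ℏ : ℝ) (q p : Fin d → ℝ) (B : Matrix (Fin d) (Fin d) ℂ)
    (x : Fin d → ℝ) : ℂ :=
  (((Real.pi * ℏ) ^ (-(d : ℝ) / 4) : ℝ) : ℂ) * (((imM B).det ^ ((1 : ℝ) / 4) : ℝ) : ℂ) *
    Complex.exp ((Complex.I / (ℏ : ℂ)) *
      ((((∑ j, p j * (x j - q j)) : ℝ) : ℂ) +
        (1 / 2 : ℂ) * ∑ j, ∑ k, ((x j - q j : ℝ) : ℂ) * B j k * ((x k - q k : ℝ) : ℂ)))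

namespace WignerAux

variable {d : ℕ}

lemma sum_sum_eq_dot (M : Matrix (Fin d) (Fin d) ℝ) (a b : Fin d → ℝ) :
    ∑ j, ∑ k, (a j : ℂ) * (M j k : ℂ) * (b k : ℂ) = ((a ⬝ᵥ M *ᵥ b : ℝ) : ℂ) := by
  push_cast [dotProduct, mulVec, Finset.mul_sum]
  exact Finset.sum_congr rfl fun j _ => Finset.sum_congr rfl fun k _ => by ring

lemma S_decomp (B : Matrix (Fin d) (Fin d) ℂ) (a b : Fin d → ℝ) :
    ∑ j, ∑ k, (a j : ℂ) * B j k * (b k : ℂ)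
      = ((a ⬝ᵥ (reM B) *ᵥ b : ℝ) : ℂ) + ((a ⬝ᵥ (imM B) *ᵥ b : ℝ) : ℂ) * Complex.I := by
  have h : ∀ j k, (a j : ℂ) * B j k * (b k : ℂ)
      = (a j : ℂ) * ((reM B j k : ℝ) : ℂ) * (b k : ℂ)
        + ((a j : ℂ) * ((imM B j k : ℝ) : ℂ) * (b k : ℂ)) * Complex.I := by
    intro j k
    have hB : B j k = ((reM B j k : ℝ) : ℂ) + ((imM B j k : ℝ) : ℂ) * Complex.I :=
      (Complex.re_add_im _).symm
    rw [hB]; ring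
  simp_rw [h, Finset.sum_add_distrib, ← Finset.sum_mul, sum_sum_eq_dot]

lemma S_decomp_conj (B : Matrix (Fin d) (Fin d) ℂ) (a b : Fin d → ℝ) :
    ∑ j, ∑ k, (a j : ℂ) * (starRingEnd ℂ) (B j k) * (b k : ℂ)
      = ((a ⬝ᵥ (reM B) *ᵥ b : ℝ) : ℂ) - ((a ⬝ᵥ (imM B) *ᵥ b : ℝ) : ℂ) * Complex.I := by
  have h : ∀ j k, (a j : ℂ) * (starRingEnd ℂ) (B j k) * (b k : ℂ)
      = (a j : ℂ) * ((reM B j k : ℝ) : ℂ) * (b k : ℂ)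
        - ((a j : ℂ) * ((imM B j k : ℝ) : ℂ) * (b k : ℂ)) * Complex.I := by
    intro j k
    have hB : (starRingEnd ℂ) (B j k)
        = ((reM B j k : ℝ) : ℂ) - ((imM B j k : ℝ) : ℂ) * Complex.I := by
      apply Complex.ext <;> simp [reM, imM]
    rw [hB]; ring
  simp_rw [h, Finset.sum_sub_distrib, ← Finset.sum_mul, sum_sum_eq_dot]

lemma dot_symm (M : Matrix (Fin d) (Fin d) ℝ) (hM : Mᵀ = M) (a b : Fin d → ℝ) :
    a ⬝ᵥ M *ᵥ b = b ⬝ᵥ M *ᵥ a := by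
  rw [dotProduct_mulVec, ← mulVec_transpose, hM, dotProduct_comm]

lemma shift_dot (M : Matrix (Fin d) (Fin d) ℝ) (a b : Fin d → ℝ) :
    (M *ᵥ a) ⬝ᵥ b = a ⬝ᵥ Mᵀ *ᵥ b := by
  rw [dotProduct_comm (M *ᵥ a) b, dotProduct_mulVec, mulVec_transpose, dotProduct_comm]

lemma quad_expand (M : Matrix (Fin d) (Fin d) ℝ) (hM : Mᵀ = M) (u y : Fin d → ℝ) (c : ℝ) :
    (u + c • y) ⬝ᵥ M *ᵥ (u + c • y)
      = u ⬝ᵥ M *ᵥ u + (2*c) * (u ⬝ᵥ M *ᵥ y) + c^2 * (y ⬝ᵥ M *ᵥ y) := by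
  simp only [dotProduct_add, add_dotProduct, mulVec_add, mulVec_smul, dotProduct_smul,
    smul_dotProduct, smul_eq_mul, dot_symm M hM y u]
  ring

lemma combine (c1 c2 : ℝ) (e0 e1 e2 E F : ℂ) (hE : e0 + e1 + e2 = E + F) :
    Complex.exp e0 * ((c1:ℂ) * (c2:ℂ) * Complex.exp e1) * ((c1:ℂ) * (c2:ℂ) * Complex.exp e2)
      = (((c1^2 : ℝ) : ℂ) * ((c2^2 : ℝ) : ℂ) * Complex.exp E) * Complex.exp F := by
  calc Complex.exp e0 * ((c1:ℂ) * (c2:ℂ) * Complex.exp e1) * ((c1:ℂ) * (c2:ℂ) * Complex.exp e2)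
      = ((c1:ℂ)^2 * (c2:ℂ)^2) * Complex.exp (e0 + e1 + e2) := by
        rw [Complex.exp_add, Complex.exp_add]; ring
    _ = _ := by rw [hE, Complex.exp_add]; push_cast; ring

open scoped MatrixOrder in
lemma gauss_int (d : ℕ) {ℏ : ℝ} (hℏ : 0 < ℏ) (A : Matrix (Fin d) (Fin d) ℝ)
    (hA : A.PosDef) (m : Fin d → ℝ) :
    ∫ y : Fin d → ℝ, Complex.exp (-((((4*ℏ)⁻¹ : ℝ)) : ℂ) * ((y ⬝ᵥ A *ᵥ y : ℝ) : ℂ)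
        + Complex.I * ((m ⬝ᵥ y : ℝ) : ℂ) / (ℏ:ℂ))
      = ((((4*Real.pi*ℏ) ^ ((d:ℝ)/2) : ℝ)) : ℂ) * ((((A.det ^ ((1:ℝ)/2))⁻¹ : ℝ)) : ℂ) *
        Complex.exp (-((m ⬝ᵥ A⁻¹ *ᵥ m : ℝ) : ℂ) / (ℏ:ℂ)) := by
  classical
  set S := CFC.sqrt A with hSdef
  have hSps : S.PosSemidef := Matrix.nonneg_iff_posSemidef.mp (CFC.sqrt_nonneg A)
  have hSS : S * S = A := CFC.sqrt_mul_sqrt_self A (Matrix.nonneg_iff_posSemidef.mpr hA.posSemidef)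
  have hSsym : Sᵀ = S := by
    ext i j; simpa using congrFun (congrFun hSps.1 i) j
  have hdet2 : S.det ^ 2 = A.det := by rw [sq, ← Matrix.det_mul, hSS]
  have hdetSnn : 0 ≤ S.det := by
    rw [hSps.1.det_eq_prod_eigenvalues]
    exact Finset.prod_nonneg fun i _ => by simpa using hSps.eigenvalues_nonneg i
  have hdetSpos : 0 < S.det := by
    rcases hdetSnn.lt_or_eq with h | h
    · exact h
    · exfalso; have h2 := hA.det_pos; rw [← hdet2, ← h] at h2; simp at h2
  have hdetSne : S.det ≠ 0 := ne_of_gt hdetSpos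
  have hSdetval : S.det = A.det ^ ((1:ℝ)/2) := by
    rw [← Real.sqrt_eq_rpow, ← hdet2, Real.sqrt_sq hdetSnn]
  set T := S⁻¹ with hT
  have hTS : T * S = 1 := Matrix.nonsing_inv_mul S (isUnit_iff_ne_zero.mpr hdetSne)
  have hST : S * T = 1 := Matrix.mul_nonsing_inv S (isUnit_iff_ne_zero.mpr hdetSne)
  have hTsym : Tᵀ = T := by rw [hT, Matrix.transpose_nonsing_inv, hSsym]
  have hTdet : T.det = S.det⁻¹ := by rw [hT, Matrix.det_nonsing_inv, Ring.inverse_eq_inv']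
  have hTdetne : T.det ≠ 0 := by rw [hTdet]; exact inv_ne_zero hdetSne
  have hTT : T * T = A⁻¹ := by rw [hT, ← Matrix.mul_inv_rev, hSS]
  set f : (Fin d → ℝ) → ℂ := fun y => Complex.exp (-((((4*ℏ)⁻¹ : ℝ)) : ℂ) * ((y ⬝ᵥ A *ᵥ y : ℝ) : ℂ)
        + Complex.I * ((m ⬝ᵥ y : ℝ) : ℂ) / (ℏ:ℂ)) with hf
  have hcd : Continuous fun y : Fin d → ℝ => y ⬝ᵥ A *ᵥ y := by
    apply continuous_finset_sum _ fun j _ => (continuous_apply j).mul ?_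
    exact (continuous_finset_sum _ fun k _ => continuous_const.mul (continuous_apply k) :
      Continuous fun y : Fin d → ℝ => ∑ k, A j k * y k)
  have hcm : Continuous fun y : Fin d → ℝ => m ⬝ᵥ y :=
    continuous_finset_sum _ fun j _ => continuous_const.mul (continuous_apply j)
  have hcont : Continuous f := by
    apply Continuous.cexp
    exact ((continuous_const.mul (Complex.continuous_ofReal.comp hcd)).add
      ((continuous_const.mul (Complex.continuous_ofReal.comp hcm)).div_const _))
  have hmeasT : Measurable (Matrix.toLin' T) :=
    (LinearMap.continuous_on_pi _).measurable
  have h1 : ∫ y, f y ∂(Measure.map (Matrix.toLin' T) volume) = ∫ z, f (Matrix.toLin' T z) :=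
    integral_map hmeasT.aemeasurable hcont.aestronglyMeasurable
  rw [Real.map_matrix_volume_pi_eq_smul_volume_pi hTdetne, integral_smul_measure,
    ENNReal.toReal_ofReal (by positivity)] at h1
  have habs : |T.det⁻¹| = S.det := by rw [hTdet, inv_inv, abs_of_pos hdetSpos]
  rw [habs] at h1
  have h2 : ∫ y, f y = S.det⁻¹ • ∫ z, f (Matrix.toLin' T z) := by
    rw [← h1, smul_smul, inv_mul_cancel₀ hdetSne, one_smul]
  set n := T *ᵥ m with hn
  have hptw : ∀ z : Fin d → ℝ, f (Matrix.toLin' T z)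
      = Complex.exp (-((((4*ℏ)⁻¹ : ℝ)) : ℂ) * ∑ i, ((z i : ℝ) : ℂ)^2
          + ∑ i, (Complex.I * ((n i : ℝ) : ℂ) / (ℏ:ℂ)) * ((z i : ℝ) : ℂ)) := by
    intro z
    rw [hf]
    simp only [Matrix.toLin'_apply]
    have e1 : (T *ᵥ z) ⬝ᵥ A *ᵥ (T *ᵥ z) = z ⬝ᵥ z := by
      rw [mulVec_mulVec, ← hSS, Matrix.mul_assoc, hST, Matrix.mul_one,
        shift_dot, hTsym, mulVec_mulVec, hTS, one_mulVec]
    have e2 : m ⬝ᵥ (T *ᵥ z) = n ⬝ᵥ z := by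
      rw [hn, shift_dot, hTsym]
    rw [e1, e2]
    congr 1
    have hzz : (z ⬝ᵥ z : ℝ) = ∑ i, z i * z i := rfl
    have hnz : (n ⬝ᵥ z : ℝ) = ∑ i, n i * z i := rfl
    rw [hzz, hnz]
    rw [Complex.ofReal_sum, Complex.ofReal_sum]
    congr 1
    · rw [Finset.mul_sum, Finset.mul_sum]
      exact Finset.sum_congr rfl fun i _ => by push_cast; ring
    · rw [Finset.mul_sum, Finset.sum_div]
      exact Finset.sum_congr rfl fun i _ => by push_cast; ring
  simp only [hptw] at h2
  have hb : (0:ℝ) < ((((4*ℏ)⁻¹ : ℝ)) : ℂ).re := by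
    simp only [Complex.ofReal_re]; positivity
  rw [GaussianFourier.integral_cexp_neg_mul_sum_add hb] at h2
  rw [h2]
  have hbase : ((Real.pi : ℝ) : ℂ) / ((((4*ℏ)⁻¹ : ℝ)) : ℂ) = ((4*Real.pi*ℏ : ℝ) : ℂ) := by
    push_cast
    field_simp
  have hsum : (∑ i, (Complex.I * ((n i : ℝ) : ℂ) / (ℏ:ℂ))^2)
      = -((m ⬝ᵥ A⁻¹ *ᵥ m : ℝ) : ℂ)/(ℏ:ℂ)^2 := by
    have hnn : (∑ i, n i * n i) = m ⬝ᵥ A⁻¹ *ᵥ m := by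
      rw [show (∑ i, n i * n i) = n ⬝ᵥ n from rfl, hn, shift_dot, hTsym, mulVec_mulVec, hTT]
    have hterm : ∀ i : Fin d, (Complex.I * ((n i : ℝ) : ℂ) / (ℏ:ℂ))^2
        = -(((n i * n i : ℝ)) : ℂ)/(ℏ:ℂ)^2 := fun i => by
      rw [div_pow, mul_pow, Complex.I_sq]; push_cast; ring
    simp_rw [hterm]
    rw [← Finset.sum_div, Finset.sum_neg_distrib, ← Complex.ofReal_sum, hnn]
  rw [hbase, hsum, Fintype.card_fin]
  have hpow : ((4*Real.pi*ℏ : ℝ) : ℂ) ^ ((d:ℂ)/2) = (((4*Real.pi*ℏ) ^ ((d:ℝ)/2) : ℝ) : ℂ) := by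
    rw [show ((d:ℂ)/2) = (((d:ℝ)/2 : ℝ) : ℂ) by push_cast; ring,
      Complex.ofReal_cpow (by positivity)]
  rw [hpow]
  have hexp : (-((m ⬝ᵥ A⁻¹ *ᵥ m : ℝ) : ℂ)/(ℏ:ℂ)^2)/(4*((((4*ℏ)⁻¹ : ℝ)) : ℂ))
      = -((m ⬝ᵥ A⁻¹ *ᵥ m : ℝ) : ℂ)/(ℏ:ℂ) := by
    have hℏ' : (ℏ:ℂ) ≠ 0 := Complex.ofReal_ne_zero.mpr hℏ.ne'
    push_cast
    field_simp
  rw [hexp, Complex.real_smul, hSdetval]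
  push_cast
  ring


end WignerAux

open WignerAux Complex in
theorem wigner_cohState (d : ℕ) (hd : 1 ≤ d) (ℏ : ℝ) (hℏ : 0 < ℏ)
    (q p : Fin d → ℝ) (B : Matrix (Fin d) (Fin d) ℂ)
    (hBsymm : B.IsSymm) (hBpos : (imM B).PosDef) (x ξ : Fin d → ℝ) :
    (∫ y : Fin d → ℝ,
        Complex.exp (-(Complex.I * (((∑ j, ξ j * y j) : ℝ) : ℂ)) / (ℏ : ℂ)) *
          (starRingEnd ℂ) (cohState d ℏ q p B (fun j => x j - y j / 2)) *
          cohState d ℏ q p B (fun j => x j + y j / 2)) =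
      (2 : ℂ) ^ d *
        Complex.exp
          (-(((Sum.elim (fun j => x j - q j) (fun j => ξ j - p j) ⬝ᵥ
                (GB B).mulVec (Sum.elim (fun j => x j - q j) (fun j => ξ j - p j))) : ℝ) : ℂ) /
            (ℏ : ℂ)) := by
  classical
  have hP : 0 < Real.pi * ℏ := mul_pos Real.pi_pos hℏ
  have hdetA : 0 < (imM B).det := hBpos.det_pos
  have hBsym : ∀ j k, B k j = B j k := fun j k => by
    simpa using congrFun (congrFun hBsymm j) k
  have hRs : (reM B)ᵀ = reM B := by
    ext j k
    simp only [Matrix.transpose_apply, reM, Matrix.of_apply]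
    rw [hBsym j k]
  have hAs : (imM B)ᵀ = imM B := by
    ext j k
    simp only [Matrix.transpose_apply, imM, Matrix.of_apply]
    rw [hBsym j k]
  set u : Fin d → ℝ := fun j => x j - q j with hu
  set v : Fin d → ℝ := fun j => ξ j - p j with hv
  set m : Fin d → ℝ := reM B *ᵥ u - v with hm
  -- pointwise identity
  have key : ∀ y : Fin d → ℝ,
      Complex.exp (-(Complex.I * (((∑ j, ξ j * y j) : ℝ) : ℂ)) / (ℏ : ℂ)) *
          (starRingEnd ℂ) (cohState d ℏ q p B (fun j => x j - y j / 2)) *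
          cohState d ℏ q p B (fun j => x j + y j / 2)
      = (((((Real.pi * ℏ) ^ (-(d : ℝ) / 4))^2 : ℝ) : ℂ) *
          ((((imM B).det ^ ((1:ℝ)/4))^2 : ℝ) : ℂ) *
          Complex.exp (-(((u ⬝ᵥ imM B *ᵥ u : ℝ)) : ℂ) / (ℏ:ℂ))) *
        Complex.exp (-((((4*ℏ)⁻¹ : ℝ)) : ℂ) * ((y ⬝ᵥ imM B *ᵥ y : ℝ) : ℂ)
          + Complex.I * ((m ⬝ᵥ y : ℝ) : ℂ) / (ℏ:ℂ)) := by
    intro y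
    simp only [cohState, _root_.map_mul, map_add, map_sum, map_div₀, _root_.map_one, map_ofNat,
      Complex.conj_I, Complex.conj_ofReal, ← Complex.exp_conj]
    refine combine _ _ _ _ _ _ _ ?_
    have hvp : (fun j => x j + y j / 2 - q j) = (u + (2⁻¹:ℝ) • y) := by
      funext j
      simp only [hu, Pi.add_apply, Pi.smul_apply, smul_eq_mul]
      ring
    have hvm : (fun j => x j - y j / 2 - q j) = (u + (-2⁻¹:ℝ) • y) := by
      funext j
      simp only [hu, Pi.add_apply, Pi.smul_apply, smul_eq_mul]
      ring
    have hlp : (∑ j, p j * (x j + y j / 2 - q j)) = p ⬝ᵥ u + (p ⬝ᵥ y)/2 := by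
      simp only [dotProduct, hu]
      rw [Finset.sum_div, ← Finset.sum_add_distrib]
      exact Finset.sum_congr rfl fun j _ => by ring
    have hlm : (∑ j, p j * (x j - y j / 2 - q j)) = p ⬝ᵥ u - (p ⬝ᵥ y)/2 := by
      simp only [dotProduct, hu]
      rw [Finset.sum_div, ← Finset.sum_sub_distrib]
      exact Finset.sum_congr rfl fun j _ => by ring
    have hmy : m ⬝ᵥ y = u ⬝ᵥ reM B *ᵥ y - (∑ j, ξ j * y j) + p ⬝ᵥ y := by
      have h1 : (reM B *ᵥ u) ⬝ᵥ y = u ⬝ᵥ reM B *ᵥ y := by rw [shift_dot, hRs]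
      have h2 : v ⬝ᵥ y = (∑ j, ξ j * y j) - p ⬝ᵥ y := by
        simp only [hv, dotProduct, sub_mul]
        rw [Finset.sum_sub_distrib]
      rw [hm, sub_dotProduct, h1, h2]
      ring
    rw [S_decomp_conj B (fun j => x j - y j / 2 - q j) (fun k => x k - y k / 2 - q k),
      S_decomp B (fun j => x j + y j / 2 - q j) (fun k => x k + y k / 2 - q k)]
    rw [hlp, hlm, hmy, hvp, hvm,
      quad_expand (reM B) hRs u y (2⁻¹), quad_expand (imM B) hAs u y (2⁻¹),
      quad_expand (reM B) hRs u y (-2⁻¹), quad_expand (imM B) hAs u y (-2⁻¹)]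
    push_cast
    linear_combination (((u ⬝ᵥ imM B *ᵥ u : ℝ) : ℂ)/(ℏ:ℂ)
      + ((y ⬝ᵥ imM B *ᵥ y : ℝ) : ℂ)/(4*(ℏ:ℂ))) * Complex.I_sq
  simp only [key]
  rw [MeasureTheory.integral_const_mul, gauss_int d hℏ (imM B) hBpos m]
  -- final bookkeeping
  have hGB : Sum.elim u v ⬝ᵥ (GB B).mulVec (Sum.elim u v)
      = u ⬝ᵥ imM B *ᵥ u + m ⬝ᵥ (imM B)⁻¹ *ᵥ m := by
    have hAinvs' : ((imM B)⁻¹)ᵀ = (imM B)⁻¹ := by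
      rw [Matrix.transpose_nonsing_inv, hAs]
    rw [hm]
    simp only [GB, Matrix.fromBlocks_mulVec, Sum.elim_comp_inl, Sum.elim_comp_inr,
      Matrix.add_mulVec, Matrix.neg_mulVec, ← Matrix.mulVec_mulVec,
      dotProduct_add, dotProduct_neg, Matrix.mulVec_sub, sub_dotProduct, dotProduct_sub,
      sumElim_dotProduct_sumElim]
    have hsh : ∀ w : Fin d → ℝ, (reM B *ᵥ u) ⬝ᵥ w = u ⬝ᵥ reM B *ᵥ w := fun w => by
      rw [shift_dot, hRs]
    simp only [hsh]
    rw [show v ⬝ᵥ (imM B)⁻¹ *ᵥ (reM B *ᵥ u) = u ⬝ᵥ reM B *ᵥ ((imM B)⁻¹ *ᵥ v) from by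
      rw [dot_symm _ hAinvs' v, hsh]]
    ring
  have hAinvs : ((imM B)⁻¹)ᵀ = (imM B)⁻¹ := by
    rw [Matrix.transpose_nonsing_inv, hAs]
  rw [hGB]
  have hconsts : (((Real.pi * ℏ) ^ (-(d : ℝ) / 4))^2) * (((imM B).det ^ ((1:ℝ)/4))^2)
      * ((4*Real.pi*ℏ) ^ ((d:ℝ)/2)) * (((imM B).det ^ ((1:ℝ)/2))⁻¹) = 2^d := by
    have e1 : ((Real.pi * ℏ) ^ (-(d : ℝ) / 4))^2 = (Real.pi * ℏ) ^ (-(d : ℝ) / 2) := by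
      rw [← Real.rpow_natCast ((Real.pi * ℏ) ^ (-(d : ℝ) / 4)) 2, ← Real.rpow_mul hP.le]
      congr 1
      push_cast; ring
    have e2 : (((imM B).det ^ ((1:ℝ)/4))^2) = (imM B).det ^ ((1:ℝ)/2) := by
      rw [← Real.rpow_natCast ((imM B).det ^ ((1:ℝ)/4)) 2, ← Real.rpow_mul hdetA.le]
      congr 1
      push_cast; ring
    have e3 : (4*Real.pi*ℏ) ^ ((d:ℝ)/2) = 2^d * (Real.pi * ℏ) ^ ((d:ℝ)/2) := by
      rw [show (4*Real.pi*ℏ:ℝ) = 4*(Real.pi*ℏ) by ring,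
        Real.mul_rpow (by norm_num) hP.le]
      congr 1
      rw [← Real.rpow_natCast 2 d,
        show (4:ℝ) = (2:ℝ)^((2:ℕ):ℝ) by rw [Real.rpow_natCast]; norm_num,
        ← Real.rpow_mul (by norm_num : (0:ℝ) ≤ 2)]
      congr 1
      push_cast; ring
    have h5 : (Real.pi * ℏ) ^ (-(d:ℝ)/2) * (Real.pi * ℏ) ^ ((d:ℝ)/2) = 1 := by
      rw [← Real.rpow_add hP, show (-(d:ℝ)/2 + (d:ℝ)/2) = 0 by ring, Real.rpow_zero]
    have h6 : (imM B).det ^ ((1:ℝ)/2) * ((imM B).det ^ ((1:ℝ)/2))⁻¹ = 1 :=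
      mul_inv_cancel₀ (ne_of_gt (Real.rpow_pos_of_pos hdetA _))
    calc (((Real.pi * ℏ) ^ (-(d : ℝ) / 4))^2) * (((imM B).det ^ ((1:ℝ)/4))^2)
        * ((4*Real.pi*ℏ) ^ ((d:ℝ)/2)) * (((imM B).det ^ ((1:ℝ)/2))⁻¹)
        = ((Real.pi * ℏ) ^ (-(d:ℝ)/2) * (Real.pi * ℏ) ^ ((d:ℝ)/2))
            * ((imM B).det ^ ((1:ℝ)/2) * ((imM B).det ^ ((1:ℝ)/2))⁻¹) * 2^d := by
          rw [e1, e2, e3]; ring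
      _ = 2^d := by rw [h5, h6]; ring
  calc ((((Real.pi * ℏ) ^ (-(d : ℝ) / 4))^2 : ℝ) : ℂ) * ((((imM B).det ^ ((1:ℝ)/4))^2 : ℝ) : ℂ) *
          Complex.exp (-(((u ⬝ᵥ imM B *ᵥ u : ℝ)) : ℂ) / (ℏ:ℂ)) *
        (((((4*Real.pi*ℏ) ^ ((d:ℝ)/2) : ℝ)) : ℂ) * ((((((imM B).det ^ ((1:ℝ)/2))⁻¹ : ℝ))) : ℂ) *
          Complex.exp (-((m ⬝ᵥ (imM B)⁻¹ *ᵥ m : ℝ) : ℂ) / (ℏ:ℂ)))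
      = (((((Real.pi * ℏ) ^ (-(d : ℝ) / 4))^2) * (((imM B).det ^ ((1:ℝ)/4))^2)
          * ((4*Real.pi*ℏ) ^ ((d:ℝ)/2)) * (((imM B).det ^ ((1:ℝ)/2))⁻¹) : ℝ) : ℂ) *
        Complex.exp (-(((u ⬝ᵥ imM B *ᵥ u + m ⬝ᵥ (imM B)⁻¹ *ᵥ m : ℝ)) : ℂ) / (ℏ:ℂ)) := by
        rw [show (-(((u ⬝ᵥ imM B *ᵥ u + m ⬝ᵥ (imM B)⁻¹ *ᵥ m : ℝ)) : ℂ) / (ℏ:ℂ))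
            = (-(((u ⬝ᵥ imM B *ᵥ u : ℝ)) : ℂ) / (ℏ:ℂ))
              + (-((m ⬝ᵥ (imM B)⁻¹ *ᵥ m : ℝ) : ℂ) / (ℏ:ℂ)) by push_cast; ring,
          Complex.exp_add]
        push_cast
        ring
    _ = (2 : ℂ) ^ d * Complex.exp
          (-(((u ⬝ᵥ imM B *ᵥ u + m ⬝ᵥ (imM B)⁻¹ *ᵥ m : ℝ)) : ℂ) / (ℏ:ℂ)) := by
        rw [hconsts]
        push_cast
        ring
end
end

section
/- (Explicit phase of the propagated spin-coherent state; spin-1/2 case, equation (deltaoft).) Let C : ℝ → ℝ³ be continuous and let θ, φ : ℝ → ℝ be C¹ with θ(t) ∈ (0,π) for all t, such that the curve n(t) := (sin θ(t) cos φ(t), sin θ(t) sin φ(t), cos θ(t)) satisfies the precession equation ṅ(t) = C(t) × n(t). Define ρ(t) := −∫₀ᵗ (C(t′)·n(t′) + (1 − cos θ(t′)) φ̇(t′)) dt′. Then the ℂ²-valued curve χ(t) := (cos(θ(t)/2) e^{iρ(t)/2}, sin(θ(t)/2) e^{i(φ(t)+ρ(t)/2)}) satisfies the spin-1/2 Schrödinger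 equation i χ̇(t) = (1/2)(C(t)·σ) χ(t). Equivalently, the quantum evolution of the spin-coherent state φ_{n(0)} equals e^{iρ(t)/2} φ_{n(t)}, i.e. the classically transported coherent state up to the phase ρ(t)/2. -/
noncomputable section

open Matrix

/-- The Pauli matrices. -/
def sigma1 : Matrix (Fin 2) (Fin 2) ℂ := !![0, 1; 1, 0]
def sigma2 : Matrix (Fin 2) (Fin 2) ℂ := !![0, -Complex.I; Complex.I, 0]
def sigma3 : Matrix (Fin 2) (Fin 2) ℂ := !![1, 0; 0, -1]

/-- For `v ∈ ℝ³`, `v·σ = v₁σ₁ + v₂σ₂ + v₃σ₃`. -/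
def dotSigma (v : Fin 3 → ℝ) : Matrix (Fin 2) (Fin 2) ℂ :=
  (v 0 : ℂ) • sigma1 + (v 1 : ℂ) • sigma2 + (v 2 : ℂ) • sigma3

/-- Cross product on `ℝ³`. -/
def cross3 (a b : Fin 3 → ℝ) : Fin 3 → ℝ :=
  ![a 1 * b 2 - a 2 * b 1, a 2 * b 0 - a 0 * b 2, a 0 * b 1 - a 1 * b 0]

/-- Explicit phase of the propagated spin-coherent state (spin 1/2): if
`n(t) = n(θ(t),φ(t))` solves the precession equation `ṅ = C × n` and
`ρ(t) = −∫₀ᵗ (C·n + (1 − cos θ)φ̇) dt′`, then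
`χ(t) = (cos(θ/2) e^{iρ/2}, sin(θ/2) e^{i(φ+ρ/2)})` solves `i χ̇ = (1/2)(C·σ)χ`;
i.e. the quantum evolution of `φ_{n(0)}` equals `e^{iρ(t)/2} φ_{n(t)}`. -/
theorem spin_phase (C : ℝ → Fin 3 → ℝ) (hC : Continuous fun t => C t)
    (θ φ θ' φ' : ℝ → ℝ)
    (hθ : ∀ t, HasDerivAt θ (θ' t) t) (hφ : ∀ t, HasDerivAt φ (φ' t) t)
    (hθ'c : Continuous θ') (hφ'c : Continuous φ')
    (hrange : ∀ t, θ t ∈ Set.Ioo 0 Real.pi)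
    (n : ℝ → Fin 3 → ℝ)
    (hn : n = fun t => ![Real.sin (θ t) * Real.cos (φ t),
      Real.sin (θ t) * Real.sin (φ t), Real.cos (θ t)])
    (hprec : ∀ t k, HasDerivAt (fun s => n s k) (cross3 (C t) (n t) k) t)
    (ρ : ℝ → ℝ)
    (hρ : ρ = fun t => -∫ s in (0 : ℝ)..t,
      ((∑ k, C s k * n s k) + (1 - Real.cos (θ s)) * φ' s))
    (χ : ℝ → Fin 2 → ℂ)
    (hχ : χ = fun t => ![(Real.cos (θ t / 2) : ℂ) * Complex.exp (Complex.I * (ρ t / 2 : ℝ)),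
      (Real.sin (θ t / 2) : ℂ) * Complex.exp (Complex.I * ((φ t + ρ t / 2 : ℝ) : ℂ))]) :
    ∀ t, ∃ χd : Fin 2 → ℂ,
      (∀ k, HasDerivAt (fun s => χ s k) (χd k) t) ∧
      Complex.I • χd = (1 / 2 : ℂ) • (dotSigma (C t)).mulVec (χ t) := by
  intro t
  obtain ⟨h0, hπ⟩ := hrange t
  have hs1 : 0 < Real.sin (θ t) := Real.sin_pos_of_pos_of_lt_pi h0 hπ
  have hθc : Continuous θ := continuous_iff_continuousAt.2 fun x => (hθ x).continuousAt
  have hφc : Continuous φ := continuous_iff_continuousAt.2 fun x => (hφ x).continuousAt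
  have hCk : ∀ k : Fin 3, Continuous fun s => C s k := fun k => (continuous_apply k).comp hC
  have hnk : ∀ k : Fin 3, Continuous fun s => n s k := by
    intro k
    rw [hn]
    fin_cases k
    · simpa [Pi.mul_def, Function.comp_def] using (Real.continuous_sin.comp hθc).mul (Real.continuous_cos.comp hφc)
    · simpa [Pi.mul_def, Function.comp_def] using (Real.continuous_sin.comp hθc).mul (Real.continuous_sin.comp hφc)
    · simpa [Function.comp_def] using (Real.continuous_cos.comp hθc)
  have hPc : Continuous fun s => (∑ k, C s k * n s k) + (1 - Real.cos (θ s)) * φ' s := by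
    apply Continuous.add
    · exact continuous_finset_sum _ fun k _ => (hCk k).mul (hnk k)
    · exact (continuous_const.sub (Real.continuous_cos.comp hθc)).mul hφ'c
  have hρd : ∀ u, HasDerivAt ρ
      (-((∑ k, C u k * n u k) + (1 - Real.cos (θ u)) * φ' u)) u := by
    intro u
    rw [hρ]
    exact ((hPc.integral_hasStrictDerivAt 0 u).hasDerivAt).neg
  -- half-angle identities
  have hhs : Real.sin (θ t) = 2 * Real.sin (θ t / 2) * Real.cos (θ t / 2) := by
    have h := Real.sin_two_mul (θ t / 2)
    rw [show 2 * (θ t / 2) = θ t by ring] at h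
    exact h.symm ▸ h
  have hhc : Real.cos (θ t) = 1 - 2 * Real.sin (θ t / 2) ^ 2 := by
    have h := Real.cos_two_mul (θ t / 2)
    rw [show 2 * (θ t / 2) = θ t by ring] at h
    have p := Real.sin_sq_add_cos_sq (θ t / 2)
    nlinarith [h, p]
  -- precession relations
  have R2 : -Real.sin (θ t) * θ' t = cross3 (C t) (n t) 2 := by
    have hd : HasDerivAt (fun s => n s 2) (-Real.sin (θ t) * θ' t) t := by
      have e2 : (fun s => n s 2) = fun s => Real.cos (θ s) := by funext s; simp [hn]
      rw [e2]; exact (hθ t).cos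
    exact hd.unique (hprec t 2)
  have R0 : (Real.cos (θ t) * θ' t) * Real.cos (φ t)
      + Real.sin (θ t) * (-Real.sin (φ t) * φ' t) = cross3 (C t) (n t) 0 := by
    have hd : HasDerivAt (fun s => n s 0)
        ((Real.cos (θ t) * θ' t) * Real.cos (φ t)
          + Real.sin (θ t) * (-Real.sin (φ t) * φ' t)) t := by
      have e0 : (fun s => n s 0) = fun s => Real.sin (θ s) * Real.cos (φ s) := by
        funext s; simp [hn]
      rw [e0]; exact (hθ t).sin.mul (hφ t).cos
    exact hd.unique (hprec t 0)
  have R1 : (Real.cos (θ t) * θ' t) * Real.sin (φ t)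
      + Real.sin (θ t) * (Real.cos (φ t) * φ' t) = cross3 (C t) (n t) 1 := by
    have hd : HasDerivAt (fun s => n s 1)
        ((Real.cos (θ t) * θ' t) * Real.sin (φ t)
          + Real.sin (θ t) * (Real.cos (φ t) * φ' t)) t := by
      have e1 : (fun s => n s 1) = fun s => Real.sin (θ s) * Real.sin (φ s) := by
        funext s; simp [hn]
      rw [e1]; exact (hθ t).sin.mul (hφ t).sin
    exact hd.unique (hprec t 1)
  simp only [cross3, hn, Matrix.cons_val_zero, Matrix.cons_val_one, Matrix.head_cons,
    Matrix.cons_val_two, Matrix.tail_cons] at R0 R1 R2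
  have key1 : θ' t = C t 1 * Real.cos (φ t) - C t 0 * Real.sin (φ t) := by
    have hne : Real.sin (θ t) ≠ 0 := ne_of_gt hs1
    apply mul_left_cancel₀ hne
    linear_combination -R2
  have key2 : Real.sin (θ t) * φ' t
      = C t 2 * Real.sin (θ t)
        - Real.cos (θ t) * (C t 0 * Real.cos (φ t) + C t 1 * Real.sin (φ t)) := by
    linear_combination (-Real.sin (φ t)) * R0 + Real.cos (φ t) * R1
      + (C t 2 * Real.sin (θ t) - Real.sin (θ t) * φ' t) * Real.sin_sq_add_cos_sq (φ t)
  rw [hhs, hhc] at key2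
  -- derivative of ρ at t, with the value in expanded half-angle form
  have hρdt : HasDerivAt ρ
      (-(C t 0 * (2 * Real.sin (θ t / 2) * Real.cos (θ t / 2)) * Real.cos (φ t)
        + C t 1 * (2 * Real.sin (θ t / 2) * Real.cos (θ t / 2)) * Real.sin (φ t)
        + C t 2 * (1 - 2 * Real.sin (θ t / 2) ^ 2)
        + (2 * Real.sin (θ t / 2) ^ 2) * φ' t)) t := by
    convert hρd t using 2
    simp [Fin.sum_univ_three, hn]
    rw [hhs, hhc]
    ring
  -- Euler relation for the second exponential
  have hE2 : Complex.exp (Complex.I * ((φ t + ρ t / 2 : ℝ) : ℂ))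
      = ((Real.cos (φ t) : ℂ) + Complex.I * (Real.sin (φ t) : ℂ))
        * Complex.exp (Complex.I * ((ρ t / 2 : ℝ) : ℂ)) := by
    push_cast
    rw [mul_add, Complex.exp_add, mul_comm Complex.I ((φ t : ℝ) : ℂ), Complex.exp_mul_I]
    rw [← Complex.ofReal_cos, ← Complex.ofReal_sin]
    ring
  -- complex casts of the key relations
  have k1C : (θ' t : ℂ) = (C t 1 : ℂ) * (Real.cos (φ t) : ℂ)
      - (C t 0 : ℂ) * (Real.sin (φ t) : ℂ) := by exact_mod_cast key1
  have k2C : (2 * (Real.sin (θ t / 2) : ℂ) * (Real.cos (θ t / 2) : ℂ)) * (φ' t : ℂ)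
      = (C t 2 : ℂ) * (2 * (Real.sin (θ t / 2) : ℂ) * (Real.cos (θ t / 2) : ℂ))
        - (1 - 2 * (Real.sin (θ t / 2) : ℂ) ^ 2)
          * ((C t 0 : ℂ) * (Real.cos (φ t) : ℂ) + (C t 1 : ℂ) * (Real.sin (φ t) : ℂ)) := by
    exact_mod_cast key2
  have pyhC : (Real.sin (θ t / 2) : ℂ) ^ 2 + (Real.cos (θ t / 2) : ℂ) ^ 2 = 1 := by
    exact_mod_cast Real.sin_sq_add_cos_sq (θ t / 2)
  have pyfC : (Real.sin (φ t) : ℂ) ^ 2 + (Real.cos (φ t) : ℂ) ^ 2 = 1 := by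
    exact_mod_cast Real.sin_sq_add_cos_sq (φ t)
  have hII : Complex.I * Complex.I = (-1 : ℂ) := Complex.I_mul_I
  refine ⟨![(((-Real.sin (θ t / 2) * (θ' t / 2) : ℝ) : ℂ)
        * Complex.exp (Complex.I * ((ρ t / 2 : ℝ) : ℂ))
      + (Real.cos (θ t / 2) : ℂ)
        * (Complex.exp (Complex.I * ((ρ t / 2 : ℝ) : ℂ))
          * (Complex.I * (((-(C t 0 * (2 * Real.sin (θ t / 2) * Real.cos (θ t / 2)) * Real.cos (φ t)
        + C t 1 * (2 * Real.sin (θ t / 2) * Real.cos (θ t / 2)) * Real.sin (φ t)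
        + C t 2 * (1 - 2 * Real.sin (θ t / 2) ^ 2)
        + (2 * Real.sin (θ t / 2) ^ 2) * φ' t)) / 2 : ℝ) : ℂ)))),
      (((Real.cos (θ t / 2) * (θ' t / 2) : ℝ) : ℂ)
        * Complex.exp (Complex.I * ((φ t + ρ t / 2 : ℝ) : ℂ))
      + (Real.sin (θ t / 2) : ℂ)
        * (Complex.exp (Complex.I * ((φ t + ρ t / 2 : ℝ) : ℂ))
          * (Complex.I * ((φ' t + (-(C t 0 * (2 * Real.sin (θ t / 2) * Real.cos (θ t / 2)) * Real.cos (φ t)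
        + C t 1 * (2 * Real.sin (θ t / 2) * Real.cos (θ t / 2)) * Real.sin (φ t)
        + C t 2 * (1 - 2 * Real.sin (θ t / 2) ^ 2)
        + (2 * Real.sin (θ t / 2) ^ 2) * φ' t)) / 2 : ℝ) : ℂ))))], ?_, ?_⟩
  · intro k
    fin_cases k
    · simp only [hχ, Fin.zero_eta, Fin.isValue, Matrix.cons_val_zero]
      exact ((((hθ t).div_const 2).cos).ofReal_comp).mul
        (((((hρdt).div_const 2).ofReal_comp).const_mul Complex.I).cexp)
    · simp only [hχ, Fin.mk_one, Fin.isValue, Matrix.cons_val_one, Matrix.head_cons]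
      exact ((((hθ t).div_const 2).sin).ofReal_comp).mul
        (((((hφ t).add ((hρdt).div_const 2)).ofReal_comp).const_mul Complex.I).cexp)
  · funext k
    fin_cases k
    · simp only [hχ, dotSigma, sigma1, sigma2, sigma3, Matrix.mulVec, dotProduct,
        Fin.sum_univ_two, Fin.zero_eta, Fin.isValue, Pi.smul_apply, smul_eq_mul,
        Matrix.cons_val_zero, Matrix.cons_val_one, Matrix.head_cons, Matrix.add_apply,
        Matrix.smul_apply, Matrix.of_apply, Matrix.cons_val', Matrix.empty_val',
        Matrix.cons_val_fin_one, Matrix.head_fin_const]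
      rw [hE2]
      linear_combination (norm := (push_cast; ring1))
        (-(Complex.I * (Real.sin (θ t / 2) : ℂ)
            * Complex.exp (Complex.I * ((ρ t / 2 : ℝ) : ℂ))) / 2) * k1C
        + ((Real.sin (θ t / 2) : ℂ) * Complex.exp (Complex.I * ((ρ t / 2 : ℝ) : ℂ)) / 2) * k2C
        + ((Real.sin (θ t / 2) : ℂ)
            * ((C t 0 : ℂ) * (Real.cos (φ t) : ℂ) + (C t 1 : ℂ) * (Real.sin (φ t) : ℂ))
            * Complex.exp (Complex.I * ((ρ t / 2 : ℝ) : ℂ))) * pyhC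
        + ((-1 : ℂ) * (φ' t : ℂ) * (Real.sin (θ t / 2) : ℂ) * (Real.sin (θ t / 2) : ℂ) * (Real.cos (θ t / 2) : ℂ) * Complex.exp (Complex.I * ((ρ t / 2 : ℝ) : ℂ))
      + (-1/2 : ℂ) * (C t 2 : ℂ) * (Real.cos (θ t / 2) : ℂ) * Complex.exp (Complex.I * ((ρ t / 2 : ℝ) : ℂ))
      + (1 : ℂ) * (C t 2 : ℂ) * (Real.sin (θ t / 2) : ℂ) * (Real.sin (θ t / 2) : ℂ) * (Real.cos (θ t / 2) : ℂ) * Complex.exp (Complex.I * ((ρ t / 2 : ℝ) : ℂ))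
      + (1/2 : ℂ) * (C t 1 : ℂ) * (Real.sin (θ t / 2) : ℂ) * (Real.sin (φ t) : ℂ) * Complex.exp (Complex.I * ((ρ t / 2 : ℝ) : ℂ))
      + (-1 : ℂ) * (C t 1 : ℂ) * (Real.sin (θ t / 2) : ℂ) * (Real.cos (θ t / 2) : ℂ) * (Real.cos (θ t / 2) : ℂ) * (Real.sin (φ t) : ℂ) * Complex.exp (Complex.I * ((ρ t / 2 : ℝ) : ℂ))
      + (-1 : ℂ) * (C t 0 : ℂ) * (Real.sin (θ t / 2) : ℂ) * (Real.cos (θ t / 2) : ℂ) * (Real.cos (θ t / 2) : ℂ) * (Real.cos (φ t) : ℂ) * Complex.exp (Complex.I * ((ρ t / 2 : ℝ) : ℂ))) * hII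
    · simp only [hχ, dotSigma, sigma1, sigma2, sigma3, Matrix.mulVec, dotProduct,
        Fin.sum_univ_two, Fin.mk_one, Fin.isValue, Pi.smul_apply, smul_eq_mul,
        Matrix.cons_val_zero, Matrix.cons_val_one, Matrix.head_cons, Matrix.add_apply,
        Matrix.smul_apply, Matrix.of_apply, Matrix.cons_val', Matrix.empty_val',
        Matrix.cons_val_fin_one, Matrix.head_fin_const]
      rw [hE2]
      linear_combination (norm := (push_cast; ring1))
        (Complex.I * (Real.cos (θ t / 2) : ℂ)
            * ((Real.cos (φ t) : ℂ) + Complex.I * (Real.sin (φ t) : ℂ))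
            * Complex.exp (Complex.I * ((ρ t / 2 : ℝ) : ℂ)) / 2) * k1C
        - ((Real.cos (θ t / 2) : ℂ)
            * ((Real.cos (φ t) : ℂ) + Complex.I * (Real.sin (φ t) : ℂ))
            * Complex.exp (Complex.I * ((ρ t / 2 : ℝ) : ℂ)) / 2) * k2C
        + ((Real.sin (θ t / 2) : ℂ) * ((φ' t : ℂ) - (C t 2 : ℂ))
            * ((Real.cos (φ t) : ℂ) + Complex.I * (Real.sin (φ t) : ℂ))
            * Complex.exp (Complex.I * ((ρ t / 2 : ℝ) : ℂ))) * pyhC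
        + ((Real.cos (θ t / 2) : ℂ) * ((C t 0 : ℂ) + Complex.I * (C t 1 : ℂ))
            * Complex.exp (Complex.I * ((ρ t / 2 : ℝ) : ℂ)) / 2) * pyfC
        + ((1 : ℂ) * (φ' t : ℂ) * (Real.sin (θ t / 2) : ℂ) * (Real.cos (φ t) : ℂ) * Complex.exp (Complex.I * ((ρ t / 2 : ℝ) : ℂ))
      + (-1 : ℂ) * (φ' t : ℂ) * (Real.sin (θ t / 2) : ℂ) * (Real.sin (θ t / 2) : ℂ) * (Real.sin (θ t / 2) : ℂ) * (Real.cos (φ t) : ℂ) * Complex.exp (Complex.I * ((ρ t / 2 : ℝ) : ℂ))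
      + (-1/2 : ℂ) * (C t 2 : ℂ) * (Real.sin (θ t / 2) : ℂ) * (Real.cos (φ t) : ℂ) * Complex.exp (Complex.I * ((ρ t / 2 : ℝ) : ℂ))
      + (1 : ℂ) * (C t 2 : ℂ) * (Real.sin (θ t / 2) : ℂ) * (Real.sin (θ t / 2) : ℂ) * (Real.sin (θ t / 2) : ℂ) * (Real.cos (φ t) : ℂ) * Complex.exp (Complex.I * ((ρ t / 2 : ℝ) : ℂ))
      + (1/2 : ℂ) * (C t 1 : ℂ) * (Real.cos (θ t / 2) : ℂ) * (Real.sin (φ t) : ℂ) * (Real.cos (φ t) : ℂ) * Complex.exp (Complex.I * ((ρ t / 2 : ℝ) : ℂ))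
      + (-1 : ℂ) * (C t 1 : ℂ) * (Real.sin (θ t / 2) : ℂ) * (Real.sin (θ t / 2) : ℂ) * (Real.cos (θ t / 2) : ℂ) * (Real.sin (φ t) : ℂ) * (Real.cos (φ t) : ℂ) * Complex.exp (Complex.I * ((ρ t / 2 : ℝ) : ℂ))
      + (-1/2 : ℂ) * (C t 0 : ℂ) * (Real.cos (θ t / 2) : ℂ) * (Real.sin (φ t) : ℂ) * (Real.sin (φ t) : ℂ) * Complex.exp (Complex.I * ((ρ t / 2 : ℝ) : ℂ))
      + (-1 : ℂ) * (C t 0 : ℂ) * (Real.sin (θ t / 2) : ℂ) * (Real.sin (θ t / 2) : ℂ) * (Real.cos (θ t / 2) : ℂ) * (Real.cos (φ t) : ℂ) * (Real.cos (φ t) : ℂ) * Complex.exp (Complex.I * ((ρ t / 2 : ℝ) : ℂ))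
      + (1 : ℂ) * Complex.I * (φ' t : ℂ) * (Real.sin (θ t / 2) : ℂ) * (Real.sin (φ t) : ℂ) * Complex.exp (Complex.I * ((ρ t / 2 : ℝ) : ℂ))
      + (-1 : ℂ) * Complex.I * (φ' t : ℂ) * (Real.sin (θ t / 2) : ℂ) * (Real.sin (θ t / 2) : ℂ) * (Real.sin (θ t / 2) : ℂ) * (Real.sin (φ t) : ℂ) * Complex.exp (Complex.I * ((ρ t / 2 : ℝ) : ℂ))
      + (-1/2 : ℂ) * Complex.I * (C t 2 : ℂ) * (Real.sin (θ t / 2) : ℂ) * (Real.sin (φ t) : ℂ) * Complex.exp (Complex.I * ((ρ t / 2 : ℝ) : ℂ))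
      + (1 : ℂ) * Complex.I * (C t 2 : ℂ) * (Real.sin (θ t / 2) : ℂ) * (Real.sin (θ t / 2) : ℂ) * (Real.sin (θ t / 2) : ℂ) * (Real.sin (φ t) : ℂ) * Complex.exp (Complex.I * ((ρ t / 2 : ℝ) : ℂ))
      + (-1 : ℂ) * Complex.I * (C t 1 : ℂ) * (Real.sin (θ t / 2) : ℂ) * (Real.sin (θ t / 2) : ℂ) * (Real.cos (θ t / 2) : ℂ) * (Real.sin (φ t) : ℂ) * (Real.sin (φ t) : ℂ) * Complex.exp (Complex.I * ((ρ t / 2 : ℝ) : ℂ))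
      + (-1 : ℂ) * Complex.I * (C t 0 : ℂ) * (Real.sin (θ t / 2) : ℂ) * (Real.sin (θ t / 2) : ℂ) * (Real.cos (θ t / 2) : ℂ) * (Real.sin (φ t) : ℂ) * (Real.cos (φ t) : ℂ) * Complex.exp (Complex.I * ((ρ t / 2 : ℝ) : ℂ))) * hII
end
end
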